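/- arXiv:2011.06965 — 6 statements merged into one kernel-verified Lean document; each statement's English description precedes it below -/
import Mathlib

section
/- Comparison principle for delay integro-differential operators: Let ε, T > 0 and let φ(a,t,u) be a function of (a,t,u) ∈ [0,∞) × (0,T] × ℝ that is measurable with respect to (a,t) and, for each fixed (a,t), is odd and nondecreasing as a function of u. For a function z : ℝ → ℝ that is continuous on (-∞,T], differentiable on (0,T], and such that all integrals below are defined, set H[z](t) := ż(t) + ∫₀^∞ φ(a, t, (z(t) − z(t − εa))/ε) da for 0 < t ≤ T. If H[z](t) ≥ 0 for all t ∈ (0,T] and z(t) ≥ 0 for all t ≤ 0, then z(t) ≥ 0 for all t ≤ T. -/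
open MeasureTheory Set Filter
open scoped Topology

/-- Comparison principle for the delay integro-differential operator
`H[z](t) = ż(t) + ∫₀^∞ φ(a, t, (z(t) − z(t − εa))/ε) da`. -/
theorem stmt_0
    (ε T : ℝ) (hε : 0 < ε) (hT : 0 < T)
    (φ : ℝ → ℝ → ℝ → ℝ)
    (hφmeas : ∀ u : ℝ, Measurable (fun p : ℝ × ℝ => φ p.1 p.2 u))
    (hφodd : ∀ a t u, φ a t (-u) = - φ a t u)
    (hφmono : ∀ a t, Monotone (φ a t))
    (z : ℝ → ℝ)
    (hzcont : ContinuousOn z (Iic T))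
    (hzdiff : ∀ t ∈ Ioc (0:ℝ) T, DifferentiableAt ℝ z t)
    (hint : ∀ t ∈ Ioc (0:ℝ) T,
      IntegrableOn (fun a => φ a t ((z t - z (t - ε * a)) / ε)) (Ioi 0))
    (hH : ∀ t ∈ Ioc (0:ℝ) T,
      0 ≤ deriv z t + ∫ a in Ioi (0:ℝ), φ a t ((z t - z (t - ε * a)) / ε))
    (hpast : ∀ t ≤ (0:ℝ), 0 ≤ z t) :
    ∀ t ≤ T, 0 ≤ z t := by
  have hφ0 : ∀ a t, φ a t 0 = 0 := by
    intro a t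
    have := hφodd a t 0
    rw [neg_zero] at this
    linarith
  -- Key claim: for every δ > 0, z t + δ * (1 + t) > 0 on [0, T].
  have key : ∀ δ : ℝ, 0 < δ → ∀ t ∈ Icc (0:ℝ) T, 0 < z t + δ * (1 + t) := by
    intro δ hδ
    by_contra h
    push_neg at h
    obtain ⟨t₁, ht₁, hw₁⟩ := h
    set S : Set ℝ := Icc (0:ℝ) T ∩ (fun t => z t + δ * (1 + t)) ⁻¹' (Iic 0) with hS
    have hcontw : ContinuousOn (fun t => z t + δ * (1 + t)) (Icc 0 T) :=
      (hzcont.mono Icc_subset_Iic_self).add (by fun_prop)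
    have hScl : IsClosed S :=
      hcontw.preimage_isClosed_of_isClosed isClosed_Icc isClosed_Iic
    have hSne : S.Nonempty := ⟨t₁, ht₁, hw₁⟩
    have hSbdd : BddBelow S := ⟨0, fun s hs => hs.1.1⟩
    set t₀ := sInf S with ht₀def
    have ht₀S : t₀ ∈ S := hScl.csInf_mem hSne hSbdd
    have ht₀Icc : t₀ ∈ Icc (0:ℝ) T := ht₀S.1
    have hwt₀ : z t₀ + δ * (1 + t₀) ≤ 0 := ht₀S.2
    have hz0 : 0 ≤ z 0 := hpast 0 le_rfl
    have ht₀pos : 0 < t₀ := by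
      rcases lt_or_eq_of_le ht₀Icc.1 with h | h
      · exact h
      · exfalso
        have : z t₀ + δ * (1 + t₀) > 0 := by rw [← h]; simp; linarith
        linarith
    have ht₀Ioc : t₀ ∈ Ioc (0:ℝ) T := ⟨ht₀pos, ht₀Icc.2⟩
    -- points strictly before t₀ in [0, T] are not in S
    have hbefore : ∀ s, 0 ≤ s → s < t₀ → 0 < z s + δ * (1 + s) := by
      intro s hs0 hst
      by_contra hc
      push_neg at hc
      have : s ∈ S := ⟨⟨hs0, le_trans hst.le ht₀Icc.2⟩, hc⟩
      have := csInf_le hSbdd this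
      linarith
    -- z t₀ ≤ z s for every s ≤ t₀
    have hmin : ∀ s ≤ t₀, z t₀ ≤ z s := by
      intro s hst
      rcases le_or_gt s 0 with hs | hs
      · have := hpast s hs
        nlinarith
      · rcases eq_or_lt_of_le hst with h | h
        · rw [h]
        · have := hbefore s hs.le h
          nlinarith
    -- the integral term is nonpositive at t₀
    have hintnonpos : (∫ a in Ioi (0:ℝ), φ a t₀ ((z t₀ - z (t₀ - ε * a)) / ε)) ≤ 0 := by
      apply setIntegral_nonpos measurableSet_Ioi
      intro a ha
      have ha' : (0:ℝ) < a := ha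
      have hle : z t₀ ≤ z (t₀ - ε * a) := hmin _ (by nlinarith)
      have hu : (z t₀ - z (t₀ - ε * a)) / ε ≤ 0 :=
        div_nonpos_of_nonpos_of_nonneg (by linarith) hε.le
      calc φ a t₀ ((z t₀ - z (t₀ - ε * a)) / ε) ≤ φ a t₀ 0 := hφmono a t₀ hu
        _ = 0 := hφ0 a t₀
    have hderiv_nonneg : 0 ≤ deriv z t₀ := by
      have := hH t₀ ht₀Ioc
      linarith
    -- but the left difference quotients are ≤ -δ, so deriv z t₀ ≤ -δ < 0
    have hd : HasDerivAt z (deriv z t₀) t₀ := (hzdiff t₀ ht₀Ioc).hasDerivAt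
    have hslope : Tendsto (slope z t₀) (𝓝[<] t₀) (𝓝 (deriv z t₀)) :=
      (hasDerivAt_iff_tendsto_slope.1 hd).mono_left
        (nhdsWithin_mono _ (fun x hx => ne_of_lt hx))
    have hderiv_le : deriv z t₀ ≤ -δ := by
      refine le_of_tendsto hslope ?_
      filter_upwards [Ioo_mem_nhdsLT_of_mem (⟨ht₀pos, le_rfl⟩ : t₀ ∈ Ioc (0:ℝ) t₀)]
        with s hs
      have hws : 0 < z s + δ * (1 + s) := hbefore s hs.1.le hs.2
      have hs2 : s < t₀ := hs.2
      have hnum : δ * (t₀ - s) ≤ z s - z t₀ := by nlinarith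
      have hden : s - t₀ < 0 := sub_neg.mpr hs.2
      rw [slope_def_field, div_le_iff_of_neg hden]
      nlinarith
    linarith
  -- conclude
  intro t ht
  rcases le_or_gt t 0 with h0 | h0
  · exact hpast t h0
  · by_contra hz
    push_neg at hz
    have h1t : (0:ℝ) < 1 + t := by linarith
    set δ : ℝ := -z t / (2 * (1 + t)) with hδdef
    have hδpos : 0 < δ := by
      apply div_pos (by linarith) (by linarith)
    have := key δ hδpos t ⟨h0.le, ht⟩
    have hδt : δ * (1 + t) = -z t / 2 := by
      rw [hδdef, div_mul_eq_mul_div, div_eq_div_iff (mul_pos two_pos h1t).ne' two_ne_zero]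
      ring
    rw [hδt] at this
    linarith
end

section
/- Existence and uniqueness for the limiting implicit ODE: Under Assumptions (A), and assuming in addition that ψ' is Lipschitz continuous on ℝ, there exists a unique solution z₀ ∈ C¹(I_T) of the problem ż₀(t) + ∫₀^∞ ψ'(a ż₀(t)) ρ(a,t) da = v(t) for t > 0, with z₀(0) = z_p(0). Moreover the solution satisfies |ż₀(t)| ≤ |v(t)| for all t. -/
open MeasureTheory Set Filter

/-- Existence and uniqueness of a `C¹` solution of the limiting implicit ODE
`ż₀(t) + ∫₀^∞ ψ'(a ż₀(t)) ρ(a,t) da = v(t)` for `t > 0`, with `z₀(0) = z_p(0)`,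
together with the stability bound `|ż₀(t)| ≤ |v(t)|`. -/
theorem stmt_3
    (T : ℝ) (hT : 0 < T)
    (ψ ψ' : ℝ → ℝ) (L' : NNReal)
    (hψeven : ∀ u, ψ (-u) = ψ u)
    (hψconv : ConvexOn ℝ Set.univ ψ)
    (hψ0 : ψ 0 = 0) (hψnonneg : ∀ u, 0 ≤ ψ u)
    (hψderiv : ∀ u, HasDerivAt ψ (ψ' u) u)
    (hψ'lip : LipschitzWith L' ψ')
    (zp : ℝ → ℝ) (Lp : NNReal) (Mp : ℝ)
    (hzp_bdd : ∀ t ≤ (0:ℝ), |zp t| ≤ Mp)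
    (hzp_lip : LipschitzOnWith Lp zp (Iic 0))
    (v : ℝ → ℝ) (hv : ContDiffOn ℝ 1 v (Icc 0 T))
    (ρ : ℝ → ℝ → ℝ)
    (hρnonneg : ∀ a t, 0 ≤ ρ a t)
    (hρint : ∀ t ∈ Icc (0:ℝ) T, IntegrableOn (fun a => (1 + a ^ 2) * ρ a t) (Ioi 0))
    (hρbdd : ∃ C : ℝ, ∀ t ∈ Icc (0:ℝ) T, ∫ a in Ioi (0:ℝ), (1 + a ^ 2) * ρ a t ≤ C)
    (hρcont : ∀ t₀ ∈ Icc (0:ℝ) T,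
      Tendsto (fun t => ∫ a in Ioi (0:ℝ), (1 + a ^ 2) * |ρ a t - ρ a t₀|)
        (nhdsWithin t₀ (Icc 0 T)) (nhds 0)) :
    ∃ z : ℝ → ℝ,
      ((z 0 = zp 0) ∧
        ContinuousOn z (Icc 0 T) ∧
        ContinuousOn (deriv z) (Icc 0 T) ∧
        (∀ t ∈ Ioc (0:ℝ) T, DifferentiableAt ℝ z t ∧
          deriv z t + ∫ a in Ioi (0:ℝ), ψ' (a * deriv z t) * ρ a t = v t)) ∧
      (∀ t ∈ Ioc (0:ℝ) T, |deriv z t| ≤ |v t|) ∧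
      ∀ z₂ : ℝ → ℝ,
        ((z₂ 0 = zp 0) ∧
          ContinuousOn z₂ (Icc 0 T) ∧
          ContinuousOn (deriv z₂) (Icc 0 T) ∧
          (∀ t ∈ Ioc (0:ℝ) T, DifferentiableAt ℝ z₂ t ∧
            deriv z₂ t + ∫ a in Ioi (0:ℝ), ψ' (a * deriv z₂ t) * ρ a t = v t)) →
        ∀ t ∈ Icc (0:ℝ) T, z₂ t = z t := by
  obtain ⟨C, hC⟩ := hρbdd
  have h0T : (0:ℝ) ∈ Icc (0:ℝ) T := ⟨le_refl 0, hT.le⟩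
  -- ψ'(0) = 0
  have hψ'0 : ψ' 0 = 0 := by
    have h1 : HasDerivAt (fun x : ℝ => ψ (-x)) (ψ' 0 * -1) 0 := by
      have := (by simpa using hψderiv 0 : HasDerivAt ψ (ψ' 0) (-(0:ℝ))).comp 0 (hasDerivAt_neg 0)
      simpa [Function.comp_def] using this
    have h2 : (fun x : ℝ => ψ (-x)) = ψ := funext hψeven
    rw [h2] at h1
    have := h1.unique (hψderiv 0)
    linarith
  -- ψ' is monotone
  have hψ'mono : Monotone ψ' := by
    have hm := hψconv.monotoneOn_deriv (fun x _ => (hψderiv x).differentiableAt)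
    intro a b hab
    have h := hm (mem_univ a) (mem_univ b) hab
    rwa [(hψderiv a).deriv, (hψderiv b).deriv] at h
  have hψ'cont : Continuous ψ' := hψ'lip.continuous
  have hψ'bound : ∀ x, |ψ' x| ≤ (L' : ℝ) * |x| := by
    intro x
    have := hψ'lip.dist_le_mul x 0
    simpa [Real.dist_eq, hψ'0] using this
  have hkey : ∀ u : ℝ, ∀ a ∈ Ioi (0:ℝ), |ψ' (a * u)| ≤ ((L' : ℝ) * |u|) * (1 + a ^ 2) := by
    intro u a ha
    have h1 : |ψ' (a * u)| ≤ (L' : ℝ) * |a * u| := hψ'bound _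
    have h2 : |a * u| = a * |u| := by rw [abs_mul, abs_of_pos ha]
    have h3 : a ≤ 1 + a ^ 2 := by nlinarith [sq_nonneg (a - 1)]
    have hL : (0:ℝ) ≤ (L' : ℝ) := L'.coe_nonneg
    rw [h2] at h1
    have h4 := mul_le_mul_of_nonneg_left h3 (mul_nonneg hL (abs_nonneg u))
    calc |ψ' (a * u)| ≤ (L' : ℝ) * (a * |u|) := h1
      _ = ((L' : ℝ) * |u|) * a := by ring
      _ ≤ ((L' : ℝ) * |u|) * (1 + a ^ 2) := h4
  -- measurability of ρ(·, t)
  have hρmeas : ∀ t ∈ Icc (0:ℝ) T,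
      AEStronglyMeasurable (fun a => ρ a t) (volume.restrict (Ioi 0)) := by
    intro t ht
    have h1 := (hρint t ht).aestronglyMeasurable
    have h2 : (fun a : ℝ => ρ a t) = fun a => (1 + a ^ 2)⁻¹ * ((1 + a ^ 2) * ρ a t) := by
      funext a
      have : (1:ℝ) + a ^ 2 ≠ 0 := by positivity
      field_simp
    rw [h2]
    exact (Continuous.aestronglyMeasurable
      ((continuous_const.add (continuous_pow 2)).inv₀ (fun a => (by positivity : (1:ℝ) + a ^ 2 ≠ 0)))).mul h1
  -- integrability of the integrand
  have hInt : ∀ t ∈ Icc (0:ℝ) T, ∀ u : ℝ,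
      IntegrableOn (fun a => ψ' (a * u) * ρ a t) (Ioi 0) := by
    intro t ht u
    refine Integrable.mono' ((hρint t ht).const_mul ((L' : ℝ) * |u|)) ?_ ?_
    · exact ((hψ'cont.comp (continuous_id.mul continuous_const)).aestronglyMeasurable).mul
        (hρmeas t ht)
    · filter_upwards [ae_restrict_mem measurableSet_Ioi] with a ha
      have h1 := hkey u a ha
      have h2 := hρnonneg a t
      calc ‖ψ' (a * u) * ρ a t‖ = |ψ' (a * u)| * ρ a t := by
            rw [norm_mul, Real.norm_eq_abs, Real.norm_eq_abs, abs_of_nonneg h2]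
        _ ≤ (((L' : ℝ) * |u|) * (1 + a ^ 2)) * ρ a t := mul_le_mul_of_nonneg_right h1 h2
        _ = (L' : ℝ) * |u| * ((1 + a ^ 2) * ρ a t) := by ring
  -- monotonicity of the nonlinearity in u
  have hGmono : ∀ t ∈ Icc (0:ℝ) T, ∀ u₁ u₂, u₁ ≤ u₂ →
      (∫ a in Ioi (0:ℝ), ψ' (a * u₁) * ρ a t) ≤ ∫ a in Ioi (0:ℝ), ψ' (a * u₂) * ρ a t := by
    intro t ht u₁ u₂ h
    refine setIntegral_mono_on (hInt t ht u₁) (hInt t ht u₂) measurableSet_Ioi ?_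
    intro a ha
    exact mul_le_mul_of_nonneg_right
      (hψ'mono (mul_le_mul_of_nonneg_left h (le_of_lt ha))) (hρnonneg a t)
  have hC0 : (0:ℝ) ≤ C :=
    le_trans (setIntegral_nonneg measurableSet_Ioi
      (fun a ha => mul_nonneg (by positivity) (hρnonneg a 0))) (hC 0 h0T)
  -- Lipschitz in u
  have hGlip : ∀ t ∈ Icc (0:ℝ) T, ∀ u₁ u₂,
      |(∫ a in Ioi (0:ℝ), ψ' (a * u₁) * ρ a t) - ∫ a in Ioi (0:ℝ), ψ' (a * u₂) * ρ a t| ≤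
        ((L' : ℝ) * C) * |u₁ - u₂| := by
    intro t ht u₁ u₂
    rw [← integral_sub (hInt t ht u₁) (hInt t ht u₂)]
    have hb : ∀ᵐ a ∂(volume.restrict (Ioi (0:ℝ))),
        ‖ψ' (a * u₁) * ρ a t - ψ' (a * u₂) * ρ a t‖ ≤
          ((L' : ℝ) * |u₁ - u₂|) * ((1 + a ^ 2) * ρ a t) := by
      filter_upwards [ae_restrict_mem measurableSet_Ioi] with a ha
      rw [← sub_mul, Real.norm_eq_abs, abs_mul]
      have h1 : |ψ' (a * u₁) - ψ' (a * u₂)| ≤ ((L' : ℝ) * |u₁ - u₂|) * (1 + a ^ 2) := by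
        have hd := hψ'lip.dist_le_mul (a * u₁) (a * u₂)
        rw [Real.dist_eq, Real.dist_eq] at hd
        have h2 : |a * u₁ - a * u₂| = a * |u₁ - u₂| := by
          rw [← mul_sub, abs_mul, abs_of_pos ha]
        have h3 : a ≤ 1 + a ^ 2 := by nlinarith [sq_nonneg (a - 1)]
        have hL : (0:ℝ) ≤ (L' : ℝ) := L'.coe_nonneg
        rw [h2] at hd
        have h4 := mul_le_mul_of_nonneg_left h3 (mul_nonneg hL (abs_nonneg (u₁ - u₂)))
        calc |ψ' (a * u₁) - ψ' (a * u₂)| ≤ (L' : ℝ) * (a * |u₁ - u₂|) := hd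
          _ = ((L' : ℝ) * |u₁ - u₂|) * a := by ring
          _ ≤ ((L' : ℝ) * |u₁ - u₂|) * (1 + a ^ 2) := h4
      rw [abs_of_nonneg (hρnonneg a t)]
      calc |ψ' (a * u₁) - ψ' (a * u₂)| * ρ a t
          ≤ (((L' : ℝ) * |u₁ - u₂|) * (1 + a ^ 2)) * ρ a t :=
            mul_le_mul_of_nonneg_right h1 (hρnonneg a t)
        _ = ((L' : ℝ) * |u₁ - u₂|) * ((1 + a ^ 2) * ρ a t) := by ring
    have h2 := norm_integral_le_of_norm_le ((hρint t ht).const_mul ((L' : ℝ) * |u₁ - u₂|)) hb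
    rw [integral_const_mul, Real.norm_eq_abs] at h2
    have h3 : ((L' : ℝ) * |u₁ - u₂|) * (∫ a in Ioi (0:ℝ), (1 + a ^ 2) * ρ a t) ≤
        ((L' : ℝ) * |u₁ - u₂|) * C :=
      mul_le_mul_of_nonneg_left (hC t ht) (by positivity)
    calc |∫ a in Ioi (0:ℝ), (ψ' (a * u₁) * ρ a t - ψ' (a * u₂) * ρ a t)|
        ≤ ((L' : ℝ) * |u₁ - u₂|) * (∫ a in Ioi (0:ℝ), (1 + a ^ 2) * ρ a t) := h2
      _ ≤ ((L' : ℝ) * |u₁ - u₂|) * C := h3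
      _ = ((L' : ℝ) * C) * |u₁ - u₂| := by ring
  -- continuity in u
  have hGcont : ∀ t ∈ Icc (0:ℝ) T,
      Continuous (fun u => ∫ a in Ioi (0:ℝ), ψ' (a * u) * ρ a t) := by
    intro t ht
    refine (LipschitzWith.of_dist_le_mul (K := ((L' : ℝ) * C).toNNReal) ?_).continuous
    intro u₁ u₂
    rw [Real.dist_eq, Real.dist_eq]
    calc |(∫ a in Ioi (0:ℝ), ψ' (a * u₁) * ρ a t) - ∫ a in Ioi (0:ℝ), ψ' (a * u₂) * ρ a t|
        ≤ ((L' : ℝ) * C) * |u₁ - u₂| := hGlip t ht u₁ u₂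
      _ = (((L' : ℝ) * C).toNNReal : ℝ) * |u₁ - u₂| := by
          rw [Real.coe_toNNReal _ (mul_nonneg L'.coe_nonneg hC0)]
  -- integrability of the difference weight
  have hDint : ∀ t ∈ Icc (0:ℝ) T, ∀ t₀ ∈ Icc (0:ℝ) T,
      IntegrableOn (fun a => (1 + a ^ 2) * |ρ a t - ρ a t₀|) (Ioi 0) := by
    intro t ht t₀ ht₀
    have h1 : (fun a : ℝ => (1 + a ^ 2) * |ρ a t - ρ a t₀|) =
        fun a => |(1 + a ^ 2) * ρ a t - (1 + a ^ 2) * ρ a t₀| := by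
      funext a
      rw [← mul_sub, abs_mul, abs_of_nonneg (by positivity : (0:ℝ) ≤ 1 + a ^ 2)]
    rw [h1]
    exact ((hρint t ht).sub (hρint t₀ ht₀)).abs
  -- continuity (estimate) in t
  have hGt : ∀ t ∈ Icc (0:ℝ) T, ∀ t₀ ∈ Icc (0:ℝ) T, ∀ u : ℝ,
      |(∫ a in Ioi (0:ℝ), ψ' (a * u) * ρ a t) - ∫ a in Ioi (0:ℝ), ψ' (a * u) * ρ a t₀| ≤
        ((L' : ℝ) * |u|) * ∫ a in Ioi (0:ℝ), (1 + a ^ 2) * |ρ a t - ρ a t₀| := by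
    intro t ht t₀ ht₀ u
    rw [← integral_sub (hInt t ht u) (hInt t₀ ht₀ u)]
    have hb : ∀ᵐ a ∂(volume.restrict (Ioi (0:ℝ))),
        ‖ψ' (a * u) * ρ a t - ψ' (a * u) * ρ a t₀‖ ≤
          ((L' : ℝ) * |u|) * ((1 + a ^ 2) * |ρ a t - ρ a t₀|) := by
      filter_upwards [ae_restrict_mem measurableSet_Ioi] with a ha
      rw [← mul_sub, Real.norm_eq_abs, abs_mul]
      calc |ψ' (a * u)| * |ρ a t - ρ a t₀|
          ≤ (((L' : ℝ) * |u|) * (1 + a ^ 2)) * |ρ a t - ρ a t₀| :=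
            mul_le_mul_of_nonneg_right (hkey u a ha) (abs_nonneg _)
        _ = ((L' : ℝ) * |u|) * ((1 + a ^ 2) * |ρ a t - ρ a t₀|) := by ring
    have h2 := norm_integral_le_of_norm_le ((hDint t ht t₀ ht₀).const_mul ((L' : ℝ) * |u|)) hb
    rw [integral_const_mul, Real.norm_eq_abs] at h2
    exact h2
  -- existence of the implicit solution
  have hex : ∀ t ∈ Icc (0:ℝ) T, ∃ u : ℝ,
      u + (∫ a in Ioi (0:ℝ), ψ' (a * u) * ρ a t) = v t ∧ |u| ≤ |v t| := by
    intro t ht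
    have hG0 : (∫ a in Ioi (0:ℝ), ψ' (a * 0) * ρ a t) = 0 := by
      simp [hψ'0]
    have h1 : -|v t| + (∫ a in Ioi (0:ℝ), ψ' (a * -|v t|) * ρ a t) ≤ v t := by
      have hGle := hGmono t ht (-|v t|) 0 (neg_nonpos.2 (abs_nonneg _))
      rw [hG0] at hGle
      linarith [neg_abs_le (v t)]
    have h2 : v t ≤ |v t| + (∫ a in Ioi (0:ℝ), ψ' (a * |v t|) * ρ a t) := by
      have hGge := hGmono t ht 0 (|v t|) (abs_nonneg _)
      rw [hG0] at hGge
      linarith [le_abs_self (v t)]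
    have hFc : ContinuousOn (fun u => u + ∫ a in Ioi (0:ℝ), ψ' (a * u) * ρ a t)
        (Icc (-|v t|) (|v t|)) := (continuous_id.add (hGcont t ht)).continuousOn
    obtain ⟨u, hu, hFu⟩ :=
      intermediate_value_Icc (neg_le_self (abs_nonneg (v t))) hFc ⟨h1, h2⟩
    exact ⟨u, hFu, abs_le.2 ⟨hu.1, hu.2⟩⟩
  choose! w₀ hw₀eq hw₀le using hex
  -- uniqueness of the implicit solution
  have huniq : ∀ t ∈ Icc (0:ℝ) T, ∀ u₁ u₂ : ℝ,
      u₁ + (∫ a in Ioi (0:ℝ), ψ' (a * u₁) * ρ a t) = v t →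
      u₂ + (∫ a in Ioi (0:ℝ), ψ' (a * u₂) * ρ a t) = v t → u₁ = u₂ := by
    intro t ht u₁ u₂ h₁ h₂
    rcases le_total u₁ u₂ with h | h
    · linarith [hGmono t ht u₁ u₂ h]
    · linarith [hGmono t ht u₂ u₁ h]
  -- expansiveness
  have hexp : ∀ t ∈ Icc (0:ℝ) T, ∀ u₁ u₂ : ℝ, |u₁ - u₂| ≤
      |(u₁ + ∫ a in Ioi (0:ℝ), ψ' (a * u₁) * ρ a t) -
        (u₂ + ∫ a in Ioi (0:ℝ), ψ' (a * u₂) * ρ a t)| := by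
    intro t ht u₁ u₂
    rcases le_total u₂ u₁ with h | h
    · have hg := hGmono t ht u₂ u₁ h
      rw [abs_of_nonneg (by linarith : (0:ℝ) ≤ u₁ - u₂)]
      calc u₁ - u₂ ≤ (u₁ + ∫ a in Ioi (0:ℝ), ψ' (a * u₁) * ρ a t) -
            (u₂ + ∫ a in Ioi (0:ℝ), ψ' (a * u₂) * ρ a t) := by linarith
        _ ≤ |(u₁ + ∫ a in Ioi (0:ℝ), ψ' (a * u₁) * ρ a t) -
            (u₂ + ∫ a in Ioi (0:ℝ), ψ' (a * u₂) * ρ a t)| := le_abs_self _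
    · have hg := hGmono t ht u₁ u₂ h
      rw [abs_sub_comm u₁ u₂,
        abs_sub_comm (u₁ + ∫ a in Ioi (0:ℝ), ψ' (a * u₁) * ρ a t) _,
        abs_of_nonneg (by linarith : (0:ℝ) ≤ u₂ - u₁)]
      calc u₂ - u₁ ≤ (u₂ + ∫ a in Ioi (0:ℝ), ψ' (a * u₂) * ρ a t) -
            (u₁ + ∫ a in Ioi (0:ℝ), ψ' (a * u₁) * ρ a t) := by linarith
        _ ≤ |(u₂ + ∫ a in Ioi (0:ℝ), ψ' (a * u₂) * ρ a t) -
            (u₁ + ∫ a in Ioi (0:ℝ), ψ' (a * u₁) * ρ a t)| := le_abs_self _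
  -- bound on v
  have hvc : ContinuousOn v (Icc 0 T) := hv.continuousOn
  obtain ⟨Mv, hMv⟩ : ∃ Mv : ℝ, ∀ t ∈ Icc (0:ℝ) T, |v t| ≤ Mv := by
    obtain ⟨Mv, hMv⟩ := isCompact_Icc.exists_bound_of_continuousOn hvc
    exact ⟨Mv, fun t ht => by simpa [Real.norm_eq_abs] using hMv t ht⟩
  -- continuity of w₀
  have hw₀cont : ContinuousOn w₀ (Icc (0:ℝ) T) := by
    intro t₀ ht₀
    have key : ∀ t ∈ Icc (0:ℝ) T, dist (w₀ t) (w₀ t₀) ≤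
        ((L' : ℝ) * Mv) * (∫ a in Ioi (0:ℝ), (1 + a ^ 2) * |ρ a t - ρ a t₀|) +
          dist (v t) (v t₀) := by
      intro t ht
      rw [Real.dist_eq, Real.dist_eq]
      have h1 := hexp t₀ ht₀ (w₀ t) (w₀ t₀)
      have e₀ := hw₀eq t₀ ht₀
      have e₁ := hw₀eq t ht
      have h2 : (w₀ t + ∫ a in Ioi (0:ℝ), ψ' (a * w₀ t) * ρ a t₀) -
          (w₀ t₀ + ∫ a in Ioi (0:ℝ), ψ' (a * w₀ t₀) * ρ a t₀) =
          ((∫ a in Ioi (0:ℝ), ψ' (a * w₀ t) * ρ a t₀) -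
            ∫ a in Ioi (0:ℝ), ψ' (a * w₀ t) * ρ a t) + (v t - v t₀) := by
        rw [e₀]; linarith
      have h3 := hGt t₀ ht₀ t ht (w₀ t)
      have habs : (∫ a in Ioi (0:ℝ), (1 + a ^ 2) * |ρ a t₀ - ρ a t|) =
          ∫ a in Ioi (0:ℝ), (1 + a ^ 2) * |ρ a t - ρ a t₀| := by
        have : (fun a : ℝ => (1 + a ^ 2) * |ρ a t₀ - ρ a t|) =
            fun a => (1 + a ^ 2) * |ρ a t - ρ a t₀| := by
          funext a; rw [abs_sub_comm]
        rw [this]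
      rw [habs] at h3
      have h4 : (L' : ℝ) * |w₀ t| ≤ (L' : ℝ) * Mv :=
        mul_le_mul_of_nonneg_left ((hw₀le t ht).trans (hMv t ht)) L'.coe_nonneg
      have h5 : (0:ℝ) ≤ ∫ a in Ioi (0:ℝ), (1 + a ^ 2) * |ρ a t - ρ a t₀| :=
        setIntegral_nonneg measurableSet_Ioi
          (fun a ha => mul_nonneg (by positivity) (abs_nonneg _))
      have h6 := le_trans h3 (mul_le_mul_of_nonneg_right h4 h5)
      calc |w₀ t - w₀ t₀| ≤ |(w₀ t + ∫ a in Ioi (0:ℝ), ψ' (a * w₀ t) * ρ a t₀) -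
            (w₀ t₀ + ∫ a in Ioi (0:ℝ), ψ' (a * w₀ t₀) * ρ a t₀)| := h1
        _ = |((∫ a in Ioi (0:ℝ), ψ' (a * w₀ t) * ρ a t₀) -
            ∫ a in Ioi (0:ℝ), ψ' (a * w₀ t) * ρ a t) + (v t - v t₀)| := by rw [h2]
        _ ≤ |(∫ a in Ioi (0:ℝ), ψ' (a * w₀ t) * ρ a t₀) -
            ∫ a in Ioi (0:ℝ), ψ' (a * w₀ t) * ρ a t| + |v t - v t₀| := abs_add_le _ _
        _ ≤ ((L' : ℝ) * Mv) * (∫ a in Ioi (0:ℝ), (1 + a ^ 2) * |ρ a t - ρ a t₀|) +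
            |v t - v t₀| := by
              have h7 : |(∫ a in Ioi (0:ℝ), ψ' (a * w₀ t) * ρ a t₀) -
                  ∫ a in Ioi (0:ℝ), ψ' (a * w₀ t) * ρ a t| =
                  |(∫ a in Ioi (0:ℝ), ψ' (a * w₀ t) * ρ a t) -
                  ∫ a in Ioi (0:ℝ), ψ' (a * w₀ t) * ρ a t₀| := abs_sub_comm _ _
              rw [h7]; linarith
    have hub : Tendsto (fun t => ((L' : ℝ) * Mv) *
        (∫ a in Ioi (0:ℝ), (1 + a ^ 2) * |ρ a t - ρ a t₀|) + dist (v t) (v t₀))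
        (nhdsWithin t₀ (Icc 0 T)) (nhds 0) := by
      have ha := (hρcont t₀ ht₀).const_mul ((L' : ℝ) * Mv)
      have hb := tendsto_iff_dist_tendsto_zero.1 (hvc t₀ ht₀)
      simpa using ha.add hb
    have : Tendsto (fun t => dist (w₀ t) (w₀ t₀)) (nhdsWithin t₀ (Icc 0 T)) (nhds 0) :=
      squeeze_zero' (Eventually.of_forall (fun t => dist_nonneg))
        (eventually_of_mem self_mem_nhdsWithin key) hub
    exact tendsto_iff_dist_tendsto_zero.2 this
  -- the clamp map and the velocity field
  set clamp : ℝ → ℝ := fun t => max 0 (min t T) with hclampdef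
  have hclampmem : ∀ t, clamp t ∈ Icc (0:ℝ) T :=
    fun t => ⟨le_max_left _ _, max_le hT.le (min_le_right _ _)⟩
  have hclampcont : Continuous clamp :=
    continuous_const.max (continuous_id.min continuous_const)
  have hclampid : ∀ t ∈ Icc (0:ℝ) T, clamp t = t := by
    intro t ht
    simp only [hclampdef]
    rw [min_eq_left ht.2, max_eq_right ht.1]
  set w : ℝ → ℝ := fun t => w₀ (clamp t) with hwdef
  have hwcont : Continuous w := hw₀cont.comp_continuous hclampcont hclampmem
  have hwt : ∀ t ∈ Icc (0:ℝ) T, w t = w₀ t := by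
    intro t ht
    simp only [hwdef]
    rw [hclampid t ht]
  set z : ℝ → ℝ := fun t => zp 0 + ∫ s in (0:ℝ)..t, w s with hzdef
  have hzderiv : ∀ t, HasDerivAt z (w t) t := by
    intro t
    rw [hzdef]
    simpa using ((hwcont.integral_hasStrictDerivAt 0 t).hasDerivAt).const_add (zp 0)
  have hderiv_eq : ∀ t, deriv z t = w t := fun t => (hzderiv t).deriv
  have hz0 : z 0 = zp 0 := by simp [hzdef]
  refine ⟨z, ⟨hz0, ?_, ?_, ?_⟩, ?_, ?_⟩
  · exact fun t _ => (hzderiv t).differentiableAt.continuousAt.continuousWithinAt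
  · have : deriv z = w := funext hderiv_eq
    rw [this]
    exact hwcont.continuousOn
  · intro t ht
    have ht' : t ∈ Icc (0:ℝ) T := ⟨ht.1.le, ht.2⟩
    refine ⟨(hzderiv t).differentiableAt, ?_⟩
    rw [hderiv_eq t, hwt t ht']
    exact hw₀eq t ht'
  · intro t ht
    have ht' : t ∈ Icc (0:ℝ) T := ⟨ht.1.le, ht.2⟩
    rw [hderiv_eq t, hwt t ht']
    exact hw₀le t ht'
  · rintro z₂ ⟨hz₂0, hz₂c, hz₂dc, hz₂ode⟩ t ht
    have hdz₂ : ∀ s ∈ Ioc (0:ℝ) T, deriv z₂ s = w s := by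
      intro s hs
      have hs' : s ∈ Icc (0:ℝ) T := ⟨hs.1.le, hs.2⟩
      have h1 := huniq s hs' (deriv z₂ s) (w₀ s) (hz₂ode s hs).2 (hw₀eq s hs')
      rw [h1, hwt s hs']
    rcases eq_or_lt_of_le ht.1 with h0 | h0
    · rw [← h0, hz₂0, hz0]
    · have key : ∀ ε ∈ Ioc (0:ℝ) t, z₂ t - z₂ ε = z t - z ε := by
        intro ε hε
        have heqd : ∀ y ∈ Ico ε t,
            HasDerivWithinAt (fun s => z₂ s - z₂ ε) (w y) (Ici y) y := by
          intro y hy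
          have hy' : y ∈ Ioc (0:ℝ) T := ⟨lt_of_lt_of_le hε.1 hy.1, hy.2.le.trans ht.2⟩
          have hd : HasDerivAt z₂ (w y) y := by
            rw [← hdz₂ y hy']
            exact (hz₂ode y hy').1.hasDerivAt
          exact (hd.sub_const _).hasDerivWithinAt
        have heqd' : ∀ y ∈ Ico ε t,
            HasDerivWithinAt (fun s => z s - z ε) (w y) (Ici y) y :=
          fun y _ => ((hzderiv y).sub_const _).hasDerivWithinAt
        have hc₂ : ContinuousOn (fun s => z₂ s - z₂ ε) (Icc ε t) :=
          (hz₂c.mono (Icc_subset_Icc hε.1.le ht.2)).sub continuousOn_const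
        have hzc : ContinuousOn z (Icc ε t) :=
          fun s _ => (hzderiv s).differentiableAt.continuousAt.continuousWithinAt
        have hc : ContinuousOn (fun s => z s - z ε) (Icc ε t) :=
          hzc.sub continuousOn_const
        have := eq_of_has_deriv_right_eq heqd heqd' hc₂ hc (by simp) t
          ⟨hε.2, le_refl t⟩
        simpa using this
      have hne : (nhdsWithin (0:ℝ) (Ioc (0:ℝ) t)).NeBot := by
        rw [← mem_closure_iff_nhdsWithin_neBot, closure_Ioc h0.ne]
        exact ⟨le_refl 0, h0.le⟩
      have hl : nhdsWithin (0:ℝ) (Ioc (0:ℝ) t) ≤ nhdsWithin (0:ℝ) (Icc (0:ℝ) T) :=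
        nhdsWithin_mono _ (fun x hx => ⟨hx.1.le, hx.2.trans ht.2⟩)
      have t1 : Tendsto (fun ε => z₂ t - z₂ ε) (nhdsWithin (0:ℝ) (Ioc (0:ℝ) t))
          (nhds (z₂ t - z₂ 0)) :=
        tendsto_const_nhds.sub (((hz₂c 0 h0T).tendsto).mono_left hl)
      have t2 : Tendsto (fun ε => z t - z ε) (nhdsWithin (0:ℝ) (Ioc (0:ℝ) t))
          (nhds (z t - z 0)) :=
        tendsto_const_nhds.sub
          (((hzderiv 0).differentiableAt.continuousAt.tendsto).mono_left nhdsWithin_le_nhds)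
      have hkey' : (fun ε => z₂ t - z₂ ε) =ᶠ[nhdsWithin (0:ℝ) (Ioc (0:ℝ) t)]
          (fun ε => z t - z ε) := eventually_of_mem self_mem_nhdsWithin key
      have hfin := tendsto_nhds_unique (Tendsto.congr' hkey' t1) t2
      have : z₂ 0 = z 0 := by rw [hz₂0, hz0]
      linarith
end

section
/- Explicit long-time limit for the exponential kernel: Let ψ(u) = u²/2, v ≡ 0, and ρ(a) = β exp(−ζ a) with constants β, ζ > 0, and let z_p : (-∞,0] → ℝ be bounded and Lipschitz. Then the solution z of ż(t) + ∫₀^∞ (z(t) − z(t−a)) β e^{−ζ a} da = 0 (t > 0), z(t) = z_p(t) (t ≤ 0), satisfies lim_{t→∞} z(t) = ( ζ² z_p(0) + β ζ ∫_{−∞}^0 e^{ζ τ} z_p(τ) dτ ) / ( ζ² + β ). -/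
open MeasureTheory Set Filter

lemma aux_const_of_deriv_zero {f : ℝ → ℝ} (hc : ContinuousOn f (Ici 0))
    (hd : ∀ x > (0:ℝ), HasDerivAt f 0 x) : ∀ t ≥ (0:ℝ), f t = f 0 := by
  intro t ht
  rcases eq_or_lt_of_le ht with h | ht'
  · rw [← h]
  have key : ∀ s ∈ Ioc (0:ℝ) t, f t = f s := by
    intro s hs
    have h := constant_of_has_deriv_right_zero (f := f) (a := s) (b := t)
      (hc.mono (Icc_subset_Ici_self.trans (Ici_subset_Ici.2 hs.1.le)))
      (fun x hx => ((hd x (lt_of_lt_of_le hs.1 hx.1)).hasDerivWithinAt))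
    exact h t ⟨hs.2, le_refl t⟩
  have h1 : Tendsto f (nhdsWithin 0 (Ioi 0)) (nhds (f 0)) :=
    ((hc 0 self_mem_Ici).mono Ioi_subset_Ici_self)
  have h2 : Tendsto f (nhdsWithin 0 (Ioi 0)) (nhds (f t)) := by
    apply Tendsto.congr' _ tendsto_const_nhds
    filter_upwards [Ioc_mem_nhdsGT_of_mem ⟨le_refl (0:ℝ), ht'⟩] with s hs
    exact key s hs
  exact tendsto_nhds_unique h2 h1

lemma aux_exp_int (ζ : ℝ) (hζ : 0 < ζ) : ∫ a in Ioi (0:ℝ), Real.exp (-ζ * a) = 1/ζ := by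
  have hd : ∀ x ∈ Ioi (0:ℝ), HasDerivAt (fun a => -Real.exp (-ζ*a)/ζ) (Real.exp (-ζ*x)) x := by
    intro x _
    have h : HasDerivAt (fun a : ℝ => Real.exp (-ζ*a)) (Real.exp (-ζ*x) * (-ζ)) x := by
      simpa using ((hasDerivAt_id x).const_mul (-ζ)).exp
    have h2 := (h.neg).div_const ζ
    refine h2.congr_deriv ?_
    rw [div_eq_iff hζ.ne']; ring
  have htend : Tendsto (fun a => -Real.exp (-ζ*a)/ζ) atTop (nhds 0) := by
    have h0 : Tendsto (fun a : ℝ => -ζ * a) atTop atBot :=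
      (tendsto_const_mul_atBot_of_neg (neg_neg_iff_pos.2 hζ)).2 tendsto_id
    have h1 : Tendsto (fun a : ℝ => Real.exp (-ζ*a)) atTop (nhds 0) :=
      Real.tendsto_exp_atBot.comp h0
    have := (h1.neg).div_const ζ
    simpa using this
  have hcont : ContinuousWithinAt (fun a => -Real.exp (-ζ*a)/ζ) (Ici 0) 0 := by
    apply Continuous.continuousWithinAt
    continuity
  have h := integral_Ioi_of_hasDerivAt_of_tendsto (f := fun a => -Real.exp (-ζ*a)/ζ)
    (f' := fun a => Real.exp (-ζ*a)) (a := 0)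
    hcont hd (exp_neg_integrableOn_Ioi 0 hζ) htend
  simp only [neg_mul] at h ⊢
  rw [h]
  simp
  ring

lemma aux_shift (f : ℝ → ℝ) (t : ℝ) : ∫ x in Iic t, f x = ∫ x in Iic (0:ℝ), f (x + t) := by
  have m : MeasurableEmbedding fun x : ℝ => x + t :=
    (Homeomorph.addRight t).isClosedEmbedding.measurableEmbedding
  have h := m.setIntegral_map (μ := (volume : Measure ℝ)) f (Iic t)
  rw [map_add_right_eq_self volume t] at h
  rw [h]
  congr 1
  ext x
  simp

lemma aux_conv (f : ℝ → ℝ) (t : ℝ) :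
    ∫ a in Ioi (0:ℝ), f (t - a) = ∫ x in Iic t, f x := by
  have h1 : ∫ a in Ioi (0:ℝ), f (t + -a) = ∫ x in Iic (-(0:ℝ)), f (t + x) :=
    integral_comp_neg_Ioi 0 (fun x => f (t + x))
  simp only [sub_eq_add_neg]
  rw [h1, aux_shift f t]
  simp only [neg_zero]
  congr 1
  ext x
  rw [add_comm]

lemma aux_exp_Iic (ζ T : ℝ) (hζ : 0 < ζ) :
    IntegrableOn (fun τ => Real.exp (ζ * τ)) (Iic T) := by
  have m : MeasurableEmbedding fun x : ℝ => -x := (Homeomorph.neg ℝ).measurableEmbedding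
  rw [IntegrableOn, ← Measure.map_neg_eq_self (volume : Measure ℝ), ← IntegrableOn,
    m.integrableOn_map_iff]
  have : ((fun τ => Real.exp (ζ * τ)) ∘ fun x : ℝ => -x) = fun x => Real.exp (-ζ * x) := by
    ext x; simp [neg_mul, mul_neg]
  rw [this, show (fun x : ℝ => -x) ⁻¹' Iic T = Ici (-T) by ext x; simp [neg_le]]
  exact (integrableOn_Ici_iff_integrableOn_Ioi).2 (exp_neg_integrableOn_Ioi (-T) hζ)

/-- Explicit long-time limit for the exponential kernel `ρ(a) = β e^{−ζa}` in the linear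
case `ψ(u) = u²/2` (so `ψ'(u) = u`), `v ≡ 0`, `ε = 1`:
`z(t) → (ζ² z_p(0) + βζ ∫_{−∞}^0 e^{ζτ} z_p(τ) dτ) / (ζ² + β)` as `t → ∞`. -/
theorem stmt_8
    (β ζ : ℝ) (hβ : 0 < β) (hζ : 0 < ζ)
    (zp : ℝ → ℝ) (Lp : NNReal) (Mp : ℝ)
    (hzp_bdd : ∀ t ≤ (0:ℝ), |zp t| ≤ Mp)
    (hzp_lip : LipschitzOnWith Lp zp (Iic 0))
    (z : ℝ → ℝ)
    (hpast : ∀ t ≤ (0:ℝ), z t = zp t)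
    (hzcont : ContinuousOn z (Ici 0))
    (hzdiff : ∀ t > (0:ℝ), DifferentiableAt ℝ z t)
    (heq : ∀ t > (0:ℝ),
      deriv z t
        + ∫ a in Ioi (0:ℝ), (z t - z (t - a)) * (β * Real.exp (-ζ * a)) = 0) :
    Tendsto z atTop (nhds
      ((ζ ^ 2 * zp 0 + β * ζ * ∫ τ in Iic (0:ℝ), Real.exp (ζ * τ) * zp τ) /
        (ζ ^ 2 + β))) := by
  -- continuity of z
  have hzpc : ContinuousOn z (Iic 0) :=
    (hzp_lip.continuousOn).congr (fun t ht => hpast t ht)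
  have hzc : Continuous z := by
    rw [continuous_iff_continuousAt]
    intro x
    rcases lt_trichotomy x 0 with hx | hx | hx
    · exact (hzpc x (le_of_lt hx)).continuousAt (Iic_mem_nhds hx)
    · subst hx
      have := (hzpc 0 self_mem_Iic).union (hzcont 0 self_mem_Ici)
      rwa [Iic_union_Ici, continuousWithinAt_univ] at this
    · exact (hzcont x (le_of_lt hx)).continuousAt (Ici_mem_nhds hx)
  -- boundedness of z on Iic T
  have hbd : ∀ T : ℝ, ∃ M : ℝ, ∀ τ ≤ T, |z τ| ≤ M := by
    intro T
    rcases le_or_gt T 0 with hT | hT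
    · refine ⟨Mp, fun τ hτ => ?_⟩
      rw [hpast τ (hτ.trans hT)]
      exact hzp_bdd τ (hτ.trans hT)
    · obtain ⟨C, hC⟩ := (isCompact_Icc (a := (0:ℝ)) (b := T)).exists_bound_of_continuousOn
        (hzc.continuousOn)
      refine ⟨max Mp C, fun τ hτ => ?_⟩
      rcases le_or_gt τ 0 with h0 | h0
      · rw [hpast τ h0]; exact (hzp_bdd τ h0).trans (le_max_left _ _)
      · exact (hC τ ⟨h0.le, hτ⟩).trans (le_max_right _ _)
  -- integrability of e^{ζτ} z τ on Iic T
  set F : ℝ → ℝ := fun τ => Real.exp (ζ * τ) * z τ with hF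
  have hFc : Continuous F := (Real.continuous_exp.comp (continuous_const.mul continuous_id)).mul hzc
  have hI : ∀ T : ℝ, IntegrableOn F (Iic T) := by
    intro T
    obtain ⟨M, hM⟩ := hbd T
    refine Integrable.mono' ((aux_exp_Iic ζ T hζ).const_mul M)
      (hFc.aestronglyMeasurable.restrict) ?_
    refine (ae_restrict_iff' measurableSet_Iic).2 (ae_of_all _ (fun τ hτ => ?_))
    have h1 : |F τ| = Real.exp (ζ * τ) * |z τ| := by
      rw [hF, abs_mul, abs_of_pos (Real.exp_pos _)]
    rw [Real.norm_eq_abs, h1]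
    calc Real.exp (ζ * τ) * |z τ| ≤ Real.exp (ζ * τ) * M :=
          mul_le_mul_of_nonneg_left (hM τ hτ) (Real.exp_pos _).le
      _ = M * Real.exp (ζ * τ) := mul_comm _ _
  -- the auxiliary function g and its derivative
  set g : ℝ → ℝ := fun t => ∫ τ in Iic t, F τ with hgdef
  have hgrep : ∀ u : ℝ, g u = g 0 + ∫ τ in (0:ℝ)..u, F τ := by
    intro u
    rw [← intervalIntegral.integral_Iic_sub_Iic (hI 0) (hI u)]
    ring
  have hg : ∀ t : ℝ, HasDerivAt g (F t) t := by
    intro t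
    have h1 : HasDerivAt (fun u => ∫ τ in (0:ℝ)..u, F τ) (F t) t :=
      intervalIntegral.integral_hasDerivAt_right (hFc.intervalIntegrable _ _)
        (hFc.stronglyMeasurableAtFilter _ _) hFc.continuousAt
    have h2 := h1.const_add (g 0)
    have h3 : (fun u => g 0 + ∫ τ in (0:ℝ)..u, F τ) = g := funext fun u => (hgrep u).symm
    rwa [h3] at h2
  -- the function w and its derivative
  set w : ℝ → ℝ := fun t => Real.exp (-ζ * t) * g t with hwdef
  have hw : ∀ t : ℝ, HasDerivAt w (z t - ζ * w t) t := by
    intro t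
    have he : HasDerivAt (fun t : ℝ => Real.exp (-ζ * t)) (Real.exp (-ζ * t) * (-ζ)) t := by
      simpa using ((hasDerivAt_id t).const_mul (-ζ)).exp
    have h := he.mul (hg t)
    refine h.congr_deriv ?_
    have hee : Real.exp (-ζ * t) * Real.exp (ζ * t) = 1 := by
      rw [← Real.exp_add]; simp
    simp only [hwdef, hF]
    linear_combination (z t) * hee
  have hwc : Continuous w := continuous_iff_continuousAt.2 fun t => (hw t).continuousAt
  -- convolution identity
  have hconv : ∀ t : ℝ, (∫ a in Ioi (0:ℝ), z (t - a) * Real.exp (-ζ * a)) = w t := by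
    intro t
    have key : ∀ a : ℝ, z (t - a) * Real.exp (-ζ * a) = Real.exp (-ζ * t) * F (t - a) := by
      intro a
      have hee : Real.exp (-ζ * t) * Real.exp (ζ * (t - a)) = Real.exp (-ζ * a) := by
        rw [← Real.exp_add]; ring_nf
      simp only [hF]
      linear_combination (-(z (t - a))) * hee
    simp only [key]
    rw [MeasureTheory.integral_const_mul, aux_conv F t]
  -- integrability of the two pieces in the delay integral
  have hI2 : ∀ t : ℝ, IntegrableOn (fun a => z (t - a) * Real.exp (-ζ * a)) (Ioi 0) := by
    intro t
    obtain ⟨M, hM⟩ := hbd t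
    refine Integrable.mono' ((exp_neg_integrableOn_Ioi 0 hζ).const_mul M)
      (((hzc.comp (continuous_const.sub continuous_id)).mul
        (Real.continuous_exp.comp (continuous_const.mul continuous_id))).aestronglyMeasurable.restrict)
      ?_
    refine (ae_restrict_iff' measurableSet_Ioi).2 (ae_of_all _ (fun a ha => ?_))
    rw [Real.norm_eq_abs, abs_mul, abs_of_pos (Real.exp_pos _)]
    exact mul_le_mul_of_nonneg_right (hM _ (by linarith [mem_Ioi.1 ha])) (Real.exp_pos _).le
  have hI1 : ∀ t : ℝ, IntegrableOn (fun a => z t * Real.exp (-ζ * a)) (Ioi 0) :=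
    fun t => (exp_neg_integrableOn_Ioi 0 hζ).const_mul (z t)
  -- the ODE for z
  have hode : ∀ t > (0:ℝ), HasDerivAt z (β * w t - β / ζ * z t) t := by
    intro t ht
    have hsplit : (∫ a in Ioi (0:ℝ), (z t - z (t - a)) * (β * Real.exp (-ζ * a)))
        = β * ((z t) * (1/ζ) - w t) := by
      have h1 : ∀ a : ℝ, (z t - z (t - a)) * (β * Real.exp (-ζ * a))
          = β * (z t * Real.exp (-ζ * a) - z (t - a) * Real.exp (-ζ * a)) := by
        intro a; ring
      simp only [h1]
      rw [MeasureTheory.integral_const_mul,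
        MeasureTheory.integral_sub (hI1 t) (hI2 t),
        MeasureTheory.integral_const_mul, aux_exp_int ζ hζ, hconv t]
    have hd := (hzdiff t ht).hasDerivAt
    have he := heq t ht
    rw [hsplit] at he
    have : deriv z t = β * w t - β / ζ * z t := by
      have : deriv z t = -(β * ((z t) * (1/ζ) - w t)) := by linarith
      rw [this]; ring
    rwa [this] at hd
  -- the conserved quantity
  set E : ℝ → ℝ := fun t => ζ * z t + β * w t with hEdef
  have hE : ∀ t ≥ (0:ℝ), E t = E 0 := by
    apply aux_const_of_deriv_zero
    · exact ((continuous_const.mul hzc).add (continuous_const.mul hwc)).continuousOn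
    · intro x hx
      have h := ((hode x hx).const_mul ζ).add ((hw x).const_mul β)
      have heq0 : ζ * (β * w x - β / ζ * z x) + β * (z x - ζ * w x) = 0 := by
        field_simp
        ring
      rwa [heq0] at h
  -- value of the conserved quantity
  have hw0 : w 0 = ∫ τ in Iic (0:ℝ), Real.exp (ζ * τ) * zp τ := by
    rw [hwdef]
    simp only [mul_zero, Real.exp_zero, one_mul]
    rw [hgdef]
    refine setIntegral_congr_fun measurableSet_Iic (fun τ hτ => ?_)
    rw [hF]
    simp only
    rw [hpast τ hτ]
  set L : ℝ := (ζ ^ 2 * zp 0 + β * ζ * ∫ τ in Iic (0:ℝ), Real.exp (ζ * τ) * zp τ) /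
      (ζ ^ 2 + β) with hLdef
  set lam : ℝ := (ζ ^ 2 + β) / ζ with hlamdef
  have hlam_pos : 0 < lam := div_pos (by positivity) hζ
  have hE0 : ζ * z 0 + β * w 0 = lam * L := by
    rw [hpast 0 le_rfl, hw0, hlamdef, hLdef]
    field_simp
  -- the function u and its constancy
  set u : ℝ → ℝ := fun t => Real.exp (lam * t) * (z t - L) with hudef
  have hu : ∀ t ≥ (0:ℝ), u t = u 0 := by
    apply aux_const_of_deriv_zero
    · exact ((Real.continuous_exp.comp (continuous_const.mul continuous_id)).mul
        (hzc.sub continuous_const)).continuousOn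
    · intro x hx
      have he : HasDerivAt (fun t : ℝ => Real.exp (lam * t)) (Real.exp (lam * x) * lam) x := by
        simpa using ((hasDerivAt_id x).const_mul lam).exp
      have hz' : HasDerivAt (fun t => z t - L) (β * w x - β / ζ * z x) x :=
        (hode x hx).sub_const L
      have h := he.mul hz'
      have key : Real.exp (lam * x) * lam * (z x - L)
          + Real.exp (lam * x) * (β * w x - β / ζ * z x) = 0 := by
        have h2 : ζ * z x + β * w x = ζ * z 0 + β * w 0 := hE x hx.le
        have hbw : β * w x = lam * L - ζ * z x := by
          rw [← hE0]; linarith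
        rw [hbw, hlamdef]
        field_simp
        ring
      rwa [key] at h
  -- explicit formula for z on [0, ∞)
  have hzform : ∀ t ≥ (0:ℝ), z t = L + (z 0 - L) * Real.exp (-(lam * t)) := by
    intro t ht
    have h := hu t ht
    rw [hudef] at h
    simp only [mul_zero, Real.exp_zero, one_mul] at h
    have hme : Real.exp (lam * t) * Real.exp (-(lam * t)) = 1 := by
      rw [← Real.exp_add]; simp
    linear_combination Real.exp (-(lam * t)) * h - (z t - L) * hme
  -- conclude
  have htend : Tendsto (fun t => L + (z 0 - L) * Real.exp (-(lam * t))) atTop (nhds L) := by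
    have h0 : Tendsto (fun t : ℝ => lam * t) atTop atTop :=
      Tendsto.const_mul_atTop hlam_pos tendsto_id
    have h1 : Tendsto (fun t : ℝ => Real.exp (-(lam * t))) atTop (nhds 0) :=
      Real.tendsto_exp_atBot.comp (tendsto_neg_atTop_atBot.comp h0)
    have := ((h1.const_mul (z 0 - L)).const_add L)
    simpa using this
  refine htend.congr' ?_
  filter_upwards [eventually_ge_atTop (0:ℝ)] with t ht
  exact (hzform t ht).symm
end

section
/- Existence and uniqueness for the limiting variational inequality: Let ψ : ℝ → ℝ be convex, Lipschitz continuous, and satisfy ψ(0) = 0, let v ∈ ℝ, and let ρ ∈ L¹([0,∞), (1+a)da) be nonnegative. Then the function J(w) := w²/2 − v w + ∫₀^∞ (ψ(a w)/a) ρ(a) da is strictly convex and coercive on ℝ, and consequently there exists a unique γ ∈ ℝ such that for all w ∈ ℝ: (v − γ) w + ∫₀^∞ ψ(a γ) ρ(a) da ≤ ∫₀^∞ ψ(a γ + w) ρ(a) da. -/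
open MeasureTheory Set Filter

namespace Stmt12Aux

noncomputable def dp (ψ : ℝ → ℝ) (x : ℝ) : ℝ :=
  sInf ((fun t => (ψ (x + t) - ψ x) / t) '' Ioi 0)

noncomputable def dm (ψ : ℝ → ℝ) (x : ℝ) : ℝ :=
  sSup ((fun t => (ψ (x + t) - ψ x) / t) '' Iio 0)

variable {ψ : ℝ → ℝ} {L : NNReal}

lemma slope_abs_le (hlip : LipschitzWith L ψ) (x : ℝ) {t : ℝ} (ht : t ≠ 0) :
    |(ψ (x + t) - ψ x) / t| ≤ L := by
  have h := hlip.dist_le_mul (x + t) x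
  rw [Real.dist_eq, Real.dist_eq, add_sub_cancel_left] at h
  rw [abs_div, div_le_iff₀ (abs_pos.mpr ht)]
  exact h

lemma slope_mono (hconv : ConvexOn ℝ Set.univ ψ) (x : ℝ) {t s : ℝ} (ht : t ≠ 0) (hs : s ≠ 0)
    (hts : t ≤ s) : (ψ (x + t) - ψ x) / t ≤ (ψ (x + s) - ψ x) / s := by
  have h := hconv.secant_mono (mem_univ x) (mem_univ (x + t)) (mem_univ (x + s))
    (fun hh => ht (by linarith [hh])) (fun hh => hs (by linarith [hh])) (by linarith)
  simpa [add_sub_cancel_left] using h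

lemma bddBelow_slopes (hlip : LipschitzWith L ψ) (x : ℝ) :
    BddBelow ((fun t => (ψ (x + t) - ψ x) / t) '' Ioi 0) := by
  refine ⟨-(L : ℝ), ?_⟩
  rintro b ⟨s, hs, rfl⟩
  exact neg_le_of_abs_le (slope_abs_le hlip x (ne_of_gt hs))

lemma bddAbove_slopes (hlip : LipschitzWith L ψ) (x : ℝ) :
    BddAbove ((fun t => (ψ (x + t) - ψ x) / t) '' Iio 0) := by
  refine ⟨(L : ℝ), ?_⟩
  rintro b ⟨s, hs, rfl⟩
  exact le_of_abs_le (slope_abs_le hlip x (ne_of_lt hs))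

lemma dp_le (hlip : LipschitzWith L ψ) {x t : ℝ} (ht : 0 < t) :
    dp ψ x ≤ (ψ (x + t) - ψ x) / t :=
  csInf_le (bddBelow_slopes hlip x) ⟨t, ht, rfl⟩

lemma le_dm (hlip : LipschitzWith L ψ) {x t : ℝ} (ht : t < 0) :
    (ψ (x + t) - ψ x) / t ≤ dm ψ x :=
  le_csSup (bddAbove_slopes hlip x) ⟨t, ht, rfl⟩

lemma abs_dp_le (hlip : LipschitzWith L ψ) (x : ℝ) : |dp ψ x| ≤ L := by
  rw [abs_le]
  constructor
  · refine le_csInf ⟨_, ⟨1, mem_Ioi.2 one_pos, rfl⟩⟩ ?_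
    rintro b ⟨s, hs, rfl⟩
    exact neg_le_of_abs_le (slope_abs_le hlip x (ne_of_gt hs))
  · exact (dp_le hlip one_pos).trans (le_of_abs_le (slope_abs_le hlip x one_ne_zero))

lemma abs_dm_le (hlip : LipschitzWith L ψ) (x : ℝ) : |dm ψ x| ≤ L := by
  rw [abs_le]
  constructor
  · refine le_trans ?_ (le_dm hlip (x := x) (t := -1) (by norm_num))
    exact neg_le_of_abs_le (slope_abs_le hlip x (by norm_num))
  · refine csSup_le ⟨_, ⟨-1, by norm_num, rfl⟩⟩ ?_
    rintro b ⟨s, hs, rfl⟩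
    exact le_of_abs_le (slope_abs_le hlip x (ne_of_lt hs))

lemma dp_le_dm (hconv : ConvexOn ℝ Set.univ ψ) (hlip : LipschitzWith L ψ) {x y : ℝ}
    (hxy : x < y) : dp ψ x ≤ dm ψ y := by
  have h1 : dp ψ x ≤ (ψ (x + (y - x)) - ψ x) / (y - x) := dp_le hlip (by linarith)
  have h2 : (ψ (y + (x - y)) - ψ y) / (x - y) ≤ dm ψ y := le_dm hlip (by linarith)
  have e : (ψ (x + (y - x)) - ψ x) / (y - x) = (ψ (y + (x - y)) - ψ y) / (x - y) := by
    rw [show x + (y - x) = y by ring, show y + (x - y) = x by ring,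
      div_eq_div_iff (by linarith) (show x - y ≠ 0 by intro h; exact absurd (by linarith : x = y) hxy.ne)]
    ring
  rw [e] at h1
  exact h1.trans h2

lemma sub_dp (hlip : LipschitzWith L ψ) {x t : ℝ} (ht : 0 < t) :
    dp ψ x * t ≤ ψ (x + t) - ψ x := by
  have h := dp_le hlip (x := x) ht
  calc dp ψ x * t ≤ ((ψ (x + t) - ψ x) / t) * t := mul_le_mul_of_nonneg_right h ht.le
    _ = ψ (x + t) - ψ x := div_mul_cancel₀ _ (ne_of_gt ht)

lemma sub_dm (hlip : LipschitzWith L ψ) {x t : ℝ} (ht : t < 0) :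
    dm ψ x * t ≤ ψ (x + t) - ψ x := by
  have h := le_dm hlip (x := x) ht
  have h2 := mul_le_mul_of_nonpos_right h ht.le
  calc dm ψ x * t ≤ ((ψ (x + t) - ψ x) / t) * t := h2
    _ = ψ (x + t) - ψ x := div_mul_cancel₀ _ (ne_of_lt ht)

lemma tendsto_slope_dp (hconv : ConvexOn ℝ Set.univ ψ) (hlip : LipschitzWith L ψ) (x : ℝ) :
    Tendsto (fun t => (ψ (x + t) - ψ x) / t) (nhdsWithin 0 (Ioi 0)) (nhds (dp ψ x)) :=
  MonotoneOn.tendsto_nhdsGT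
    (fun t ht s hs hts => slope_mono hconv x (ne_of_gt ht) (ne_of_gt hs) hts)
    (bddBelow_slopes hlip x)

lemma tendsto_slope_dm (hconv : ConvexOn ℝ Set.univ ψ) (hlip : LipschitzWith L ψ) (x : ℝ) :
    Tendsto (fun t => (ψ (x + t) - ψ x) / t) (nhdsWithin 0 (Iio 0)) (nhds (dm ψ x)) :=
  MonotoneOn.tendsto_nhdsLT
    (fun t ht s hs hts => slope_mono hconv x (ne_of_lt ht) (ne_of_lt hs) hts)
    (bddAbove_slopes hlip x)

lemma tendsto_slope_dp_seq (hconv : ConvexOn ℝ Set.univ ψ) (hlip : LipschitzWith L ψ) (x : ℝ)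
    {u : ℕ → ℝ} (hu : ∀ n, 0 < u n) (hu0 : Tendsto u atTop (nhds 0)) :
    Tendsto (fun n => (ψ (x + u n) - ψ x) / u n) atTop (nhds (dp ψ x)) :=
  (tendsto_slope_dp hconv hlip x).comp
    (tendsto_nhdsWithin_iff.2 ⟨hu0, Eventually.of_forall hu⟩)

lemma tendsto_slope_dm_seq (hconv : ConvexOn ℝ Set.univ ψ) (hlip : LipschitzWith L ψ) (x : ℝ)
    {u : ℕ → ℝ} (hu : ∀ n, u n < 0) (hu0 : Tendsto u atTop (nhds 0)) :
    Tendsto (fun n => (ψ (x + u n) - ψ x) / u n) atTop (nhds (dm ψ x)) :=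
  (tendsto_slope_dm hconv hlip x).comp
    (tendsto_nhdsWithin_iff.2 ⟨hu0, Eventually.of_forall hu⟩)

end Stmt12Aux

/-- Existence and uniqueness for the limiting variational inequality: the functional
`J(w) = w²/2 − vw + ∫₀^∞ (ψ(aw)/a) ρ(a) da` is strictly convex and coercive, and there
is a unique `γ` with `(v − γ)w + ∫ψ(aγ)ρ ≤ ∫ψ(aγ + w)ρ` for all `w`. -/
theorem stmt_12
    (ψ : ℝ → ℝ) (L : NNReal)
    (hψconv : ConvexOn ℝ Set.univ ψ)
    (hψlip : LipschitzWith L ψ)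
    (hψ0 : ψ 0 = 0)
    (v : ℝ)
    (ρ : ℝ → ℝ)
    (hρnonneg : ∀ a, 0 ≤ ρ a)
    (hρint : IntegrableOn (fun a => (1 + a) * ρ a) (Ioi 0)) :
    StrictConvexOn ℝ Set.univ
      (fun w : ℝ => w ^ 2 / 2 - v * w + ∫ a in Ioi (0:ℝ), (ψ (a * w) / a) * ρ a) ∧
    Tendsto (fun w : ℝ => w ^ 2 / 2 - v * w + ∫ a in Ioi (0:ℝ), (ψ (a * w) / a) * ρ a)
      (Filter.cocompact ℝ) Filter.atTop ∧
    ∃! γ : ℝ, ∀ w : ℝ,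
      (v - γ) * w + ∫ a in Ioi (0:ℝ), ψ (a * γ) * ρ a
        ≤ ∫ a in Ioi (0:ℝ), ψ (a * γ + w) * ρ a := by
  have hψcont : Continuous ψ := hψlip.continuous
  have hψabs : ∀ x : ℝ, |ψ x| ≤ L * |x| := by
    intro x
    have h := hψlip.dist_le_mul x 0
    simpa [Real.dist_eq, hψ0] using h
  -- measurability and integrability of ρ
  have hρm : AEStronglyMeasurable ρ (volume.restrict (Ioi 0)) := by
    have h1 := hρint.aestronglyMeasurable
    have hco : ContinuousOn (fun a : ℝ => (1 + a)⁻¹) (Ioi 0) := by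
      refine ContinuousOn.inv₀ (continuous_const.add continuous_id).continuousOn ?_
      intro a ha
      have : (0:ℝ) < a := ha
      positivity
    have h2 : AEStronglyMeasurable (fun a => (1 + a)⁻¹ * ((1 + a) * ρ a))
        (volume.restrict (Ioi 0)) :=
      (hco.aestronglyMeasurable measurableSet_Ioi).mul h1
    refine h2.congr ?_
    filter_upwards [ae_restrict_mem measurableSet_Ioi] with a ha
    have h3 : (1:ℝ) + a ≠ 0 := by have : (0:ℝ) < a := ha; positivity
    field_simp
  have hρI : IntegrableOn ρ (Ioi 0) := by
    refine hρint.mono' hρm ?_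
    filter_upwards [ae_restrict_mem measurableSet_Ioi] with a ha
    have h0 : (0:ℝ) < a := ha
    rw [Real.norm_eq_abs, abs_of_nonneg (hρnonneg a)]
    nlinarith [hρnonneg a]
  -- generic integrability against ρ with linearly growing bound
  have keyInt : ∀ (g : ℝ → ℝ) (C : ℝ), AEStronglyMeasurable g (volume.restrict (Ioi 0)) →
      (∀ a ∈ Ioi (0:ℝ), |g a| ≤ C * (1 + a)) →
      IntegrableOn (fun a => g a * ρ a) (Ioi 0) := by
    intro g C hgm hb
    refine (hρint.const_mul C).mono' (hgm.mul hρm) ?_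
    filter_upwards [ae_restrict_mem measurableSet_Ioi] with a ha
    rw [Real.norm_eq_abs, abs_mul, abs_of_nonneg (hρnonneg a)]
    calc |g a| * ρ a ≤ (C * (1 + a)) * ρ a :=
          mul_le_mul_of_nonneg_right (hb a ha) (hρnonneg a)
      _ = C * ((1 + a) * ρ a) := by ring
  -- K integrand facts
  have hKpt : ∀ (w a : ℝ), a ∈ Ioi (0:ℝ) → |ψ (a * w) / a| ≤ L * |w| := by
    intro w a ha
    have ha0 : (0:ℝ) < a := ha
    rw [abs_div, abs_of_pos ha0, div_le_iff₀ ha0]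
    calc |ψ (a * w)| ≤ L * |a * w| := hψabs _
      _ = L * |w| * a := by rw [abs_mul, abs_of_pos ha0]; ring
  have hKm : ∀ w : ℝ, AEStronglyMeasurable (fun a => ψ (a * w) / a)
      (volume.restrict (Ioi 0)) := by
    intro w
    refine ContinuousOn.aestronglyMeasurable ?_ measurableSet_Ioi
    exact ((hψcont.comp (continuous_id.mul continuous_const)).continuousOn).div
      continuousOn_id (fun a ha => ne_of_gt ha)
  have hKI : ∀ w : ℝ, IntegrableOn (fun a => ψ (a * w) / a * ρ a) (Ioi 0) := by
    intro w
    refine keyInt _ (L * |w|) (hKm w) ?_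
    intro a ha
    have ha0 : (0:ℝ) < a := ha
    have h1 := hKpt w a ha
    nlinarith [abs_nonneg (ψ (a * w) / a), mul_nonneg (L.coe_nonneg) (abs_nonneg w)]
  -- g integrand facts
  have hgm : ∀ (γ w : ℝ), AEStronglyMeasurable (fun a => ψ (a * γ + w))
      (volume.restrict (Ioi 0)) := fun γ w =>
    (hψcont.comp ((continuous_id.mul continuous_const).add continuous_const)).aestronglyMeasurable
  have hgI : ∀ γ w : ℝ, IntegrableOn (fun a => ψ (a * γ + w) * ρ a) (Ioi 0) := by
    intro γ w
    refine keyInt _ (L * (|γ| + |w|)) (hgm γ w) fun a ha => ?_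
    have ha0 : (0:ℝ) < a := ha
    calc |ψ (a * γ + w)| ≤ L * |a * γ + w| := hψabs _
      _ ≤ L * (a * |γ| + |w|) := by
          refine mul_le_mul_of_nonneg_left ?_ L.coe_nonneg
          calc |a * γ + w| ≤ |a * γ| + |w| := abs_add_le _ _
            _ = a * |γ| + |w| := by rw [abs_mul, abs_of_pos ha0]
      _ ≤ L * (|γ| + |w|) * (1 + a) := by nlinarith [abs_nonneg γ, abs_nonneg w, L.coe_nonneg, mul_nonneg L.coe_nonneg (mul_nonneg ha0.le (abs_nonneg w)), mul_nonneg L.coe_nonneg (abs_nonneg γ)]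
  have hγ0I : ∀ γ : ℝ, IntegrableOn (fun a => ψ (a * γ) * ρ a) (Ioi 0) := by
    intro γ
    have := hgI γ 0
    simpa using this
  have hdiffI : ∀ γ w : ℝ, IntegrableOn (fun a => (ψ (a * γ + w) - ψ (a * γ)) * ρ a) (Ioi 0) := by
    intro γ w
    have := (hgI γ w).sub (hγ0I γ)
    simpa [sub_mul, Pi.sub_def] using this
  -- dp/dm measurability and integrability
  have hu0 : Tendsto (fun n : ℕ => (1:ℝ) / (n + 1)) atTop (nhds 0) :=
    tendsto_one_div_add_atTop_nhds_zero_nat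
  have hupos : ∀ n : ℕ, (0:ℝ) < 1 / (n + 1) := fun n => by positivity
  have hdpm : ∀ γ : ℝ, AEStronglyMeasurable (fun a => Stmt12Aux.dp ψ (a * γ))
      (volume.restrict (Ioi 0)) := by
    intro γ
    refine aestronglyMeasurable_of_tendsto_ae atTop
      (f := fun (n : ℕ) (a : ℝ) => (ψ (a * γ + 1 / (n + 1)) - ψ (a * γ)) / (1 / (n + 1)))
      (fun n => Continuous.aestronglyMeasurable (by fun_prop)) ?_
    refine Eventually.of_forall fun a => ?_
    exact Stmt12Aux.tendsto_slope_dp_seq hψconv hψlip (a * γ) hupos hu0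
  have hdmm : ∀ γ : ℝ, AEStronglyMeasurable (fun a => Stmt12Aux.dm ψ (a * γ))
      (volume.restrict (Ioi 0)) := by
    intro γ
    refine aestronglyMeasurable_of_tendsto_ae atTop
      (f := fun (n : ℕ) (a : ℝ) => (ψ (a * γ + -(1 / (n + 1))) - ψ (a * γ)) / (-(1 / (n + 1))))
      (fun n => Continuous.aestronglyMeasurable (by fun_prop)) ?_
    refine Eventually.of_forall fun a => ?_
    exact Stmt12Aux.tendsto_slope_dm_seq hψconv hψlip (a * γ)
      (fun n => neg_neg_iff_pos.mpr (hupos n)) (by simpa using hu0.neg)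
  have hLbound : ∀ (h : ℝ → ℝ), (∀ x, |h x| ≤ L) → ∀ a ∈ Ioi (0:ℝ),
      |h a| ≤ (L : ℝ) * (1 + a) := by
    intro h hh a ha
    have ha0 : (0:ℝ) < a := ha
    nlinarith [hh a, L.coe_nonneg]
  have hdpI : ∀ γ : ℝ, IntegrableOn (fun a => Stmt12Aux.dp ψ (a * γ) * ρ a) (Ioi 0) :=
    fun γ => keyInt _ L (hdpm γ)
      (hLbound _ (fun x => Stmt12Aux.abs_dp_le hψlip (x * γ)))
  have hdmI : ∀ γ : ℝ, IntegrableOn (fun a => Stmt12Aux.dm ψ (a * γ) * ρ a) (Ioi 0) :=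
    fun γ => keyInt _ L (hdmm γ)
      (hLbound _ (fun x => Stmt12Aux.abs_dm_le hψlip (x * γ)))

  -- Part 1: strict convexity
  have hKconv : ConvexOn ℝ Set.univ (fun w : ℝ => ∫ a in Ioi (0:ℝ), ψ (a * w) / a * ρ a) := by
    refine ⟨convex_univ, fun x _ y _ p q hp hq hpq => ?_⟩
    simp only [smul_eq_mul]
    have hmid : IntegrableOn
        (fun a => p * (ψ (a * x) / a * ρ a) + q * (ψ (a * y) / a * ρ a)) (Ioi 0) :=
      ((hKI x).const_mul p).add ((hKI y).const_mul q)
    calc ∫ a in Ioi (0:ℝ), ψ (a * (p * x + q * y)) / a * ρ a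
        ≤ ∫ a in Ioi (0:ℝ), (p * (ψ (a * x) / a * ρ a) + q * (ψ (a * y) / a * ρ a)) := by
          refine setIntegral_mono_on (hKI _) hmid measurableSet_Ioi fun a ha => ?_
          have ha0 : (0:ℝ) < a := ha
          have hc := hψconv.2 (mem_univ (a * x)) (mem_univ (a * y)) hp hq hpq
          simp only [smul_eq_mul] at hc
          have hc' : ψ (a * (p * x + q * y)) ≤ p * ψ (a * x) + q * ψ (a * y) := by
            rw [show a * (p * x + q * y) = p * (a * x) + q * (a * y) by ring]
            exact hc
          have h4 : ψ (a * (p * x + q * y)) / a ≤ (p * ψ (a * x) + q * ψ (a * y)) / a := by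
            gcongr
          calc ψ (a * (p * x + q * y)) / a * ρ a
              ≤ ((p * ψ (a * x) + q * ψ (a * y)) / a) * ρ a :=
                mul_le_mul_of_nonneg_right h4 (hρnonneg a)
            _ = p * (ψ (a * x) / a * ρ a) + q * (ψ (a * y) / a * ρ a) := by
                field_simp
      _ = p * (∫ a in Ioi (0:ℝ), ψ (a * x) / a * ρ a)
          + q * (∫ a in Ioi (0:ℝ), ψ (a * y) / a * ρ a) := by
          rw [integral_add ((hKI x).const_mul p) ((hKI y).const_mul q),
            integral_const_mul, integral_const_mul]
  have hJstrict : StrictConvexOn ℝ Set.univ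
      (fun w : ℝ => w ^ 2 / 2 - v * w + ∫ a in Ioi (0:ℝ), (ψ (a * w) / a) * ρ a) := by
    refine StrictConvexOn.add_convexOn ?_ hKconv
    refine ⟨convex_univ, fun x _ y _ hxy p q hp hq hpq => ?_⟩
    simp only [smul_eq_mul]
    have h1 : (0:ℝ) < (x - y) ^ 2 := by
      have h0 : x - y ≠ 0 := sub_ne_zero.2 hxy
      rw [← sq_abs]
      exact pow_pos (abs_pos.2 h0) 2
    nlinarith [mul_pos (mul_pos hp hq) h1]
  -- Part 2: coercivity
  have hmnonneg : 0 ≤ ∫ a in Ioi (0:ℝ), ρ a :=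
    setIntegral_nonneg measurableSet_Ioi fun a _ => hρnonneg a
  set m : ℝ := ∫ a in Ioi (0:ℝ), ρ a with hm
  have hKlb : ∀ w : ℝ, -((L : ℝ) * m * |w|) ≤ ∫ a in Ioi (0:ℝ), ψ (a * w) / a * ρ a := by
    intro w
    have h1 : ∫ a in Ioi (0:ℝ), (-(L * |w|)) * ρ a ≤ ∫ a in Ioi (0:ℝ), ψ (a * w) / a * ρ a := by
      refine setIntegral_mono_on (hρI.const_mul _) (hKI w) measurableSet_Ioi fun a ha => ?_
      have h2 := hKpt w a ha
      have h3 : -((L:ℝ) * |w|) ≤ ψ (a * w) / a := neg_le_of_abs_le h2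
      exact mul_le_mul_of_nonneg_right h3 (hρnonneg a)
    rw [integral_const_mul] at h1
    calc -((L : ℝ) * m * |w|) = -(L * |w|) * m := by ring
      _ ≤ _ := h1
  have hcoer : Tendsto (fun w : ℝ => w ^ 2 / 2 - v * w + ∫ a in Ioi (0:ℝ), (ψ (a * w) / a) * ρ a)
      (Filter.cocompact ℝ) Filter.atTop := by
    set C : ℝ := |v| + L * m with hC
    have hC0 : 0 ≤ C := by positivity
    have h1 : Tendsto (fun r : ℝ => r ^ 2 / 2 - C * r) atTop atTop := by
      refine tendsto_atTop_mono' atTop ?_ tendsto_id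
      filter_upwards [eventually_ge_atTop (2 * C + 2)] with r hr
      have h0 : (0:ℝ) < r := by linarith
      simp only [id_eq]
      nlinarith [mul_le_mul_of_nonneg_left hr h0.le]
    have h2 : Tendsto (fun w : ℝ => |w| ^ 2 / 2 - C * |w|) (Filter.cocompact ℝ) atTop := by
      have h3 := h1.comp (tendsto_norm_cocompact_atTop (E := ℝ))
      simpa only [Function.comp_def, Real.norm_eq_abs] using h3
    refine tendsto_atTop_mono ?_ h2
    intro w
    have h4 : v * w ≤ |v| * |w| := by
      calc v * w ≤ |v * w| := le_abs_self _
        _ = |v| * |w| := abs_mul _ _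
    have h5 := hKlb w
    have h6 : |w| ^ 2 = w ^ 2 := sq_abs w
    simp only [hC]
    nlinarith

  -- continuity of J and existence of a minimizer
  have hJcont : Continuous (fun w : ℝ => w ^ 2 / 2 - v * w
      + ∫ a in Ioi (0:ℝ), (ψ (a * w) / a) * ρ a) := by
    have h := hJstrict.convexOn.continuousOn isOpen_univ
    rw [← continuousOn_univ]
    exact h
  obtain ⟨γ, hγmin⟩ := hJcont.exists_forall_le hcoer
  -- dominated convergence lemmas for slope integrals
  have hDCTp : ∀ (γ' : ℝ) (s : ℕ → ℝ → ℝ), (∀ n, ContinuousOn (s n) (Ioi 0)) →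
      (∀ n, ∀ a ∈ Ioi (0:ℝ), 0 < s n a) →
      (∀ a ∈ Ioi (0:ℝ), Tendsto (fun n => s n a) atTop (nhds 0)) →
      Tendsto (fun n => ∫ a in Ioi (0:ℝ), (ψ (a * γ' + s n a) - ψ (a * γ')) / (s n a) * ρ a)
        atTop (nhds (∫ a in Ioi (0:ℝ), Stmt12Aux.dp ψ (a * γ') * ρ a)) := by
    intro γ' s hsc hspos hs0
    refine tendsto_integral_of_dominated_convergence (fun a => (L : ℝ) * ρ a) ?_
      (hρI.const_mul L) ?_ ?_
    · intro n
      have h1 : ContinuousOn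
          (fun a => (ψ (a * γ' + s n a) - ψ (a * γ')) / (s n a)) (Ioi 0) := by
        refine ContinuousOn.div ?_ (hsc n) (fun a ha => ne_of_gt (hspos n a ha))
        refine ContinuousOn.sub ?_ ((hψcont.comp (continuous_id.mul continuous_const)).continuousOn)
        exact hψcont.comp_continuousOn
          (((continuous_id.mul continuous_const).continuousOn).add (hsc n))
      exact (h1.aestronglyMeasurable measurableSet_Ioi).mul hρm
    · intro n
      filter_upwards [ae_restrict_mem measurableSet_Ioi] with a ha
      rw [Real.norm_eq_abs, abs_mul, abs_of_nonneg (hρnonneg a)]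
      exact mul_le_mul_of_nonneg_right
        (Stmt12Aux.slope_abs_le hψlip (a * γ') (ne_of_gt (hspos n a ha))) (hρnonneg a)
    · filter_upwards [ae_restrict_mem measurableSet_Ioi] with a ha
      exact (Stmt12Aux.tendsto_slope_dp_seq hψconv hψlip (a * γ')
        (fun n => hspos n a ha) (hs0 a ha)).mul_const (ρ a)
  have hDCTm : ∀ (γ' : ℝ) (s : ℕ → ℝ → ℝ), (∀ n, ContinuousOn (s n) (Ioi 0)) →
      (∀ n, ∀ a ∈ Ioi (0:ℝ), s n a < 0) →
      (∀ a ∈ Ioi (0:ℝ), Tendsto (fun n => s n a) atTop (nhds 0)) →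
      Tendsto (fun n => ∫ a in Ioi (0:ℝ), (ψ (a * γ' + s n a) - ψ (a * γ')) / (s n a) * ρ a)
        atTop (nhds (∫ a in Ioi (0:ℝ), Stmt12Aux.dm ψ (a * γ') * ρ a)) := by
    intro γ' s hsc hsneg hs0
    refine tendsto_integral_of_dominated_convergence (fun a => (L : ℝ) * ρ a) ?_
      (hρI.const_mul L) ?_ ?_
    · intro n
      have h1 : ContinuousOn
          (fun a => (ψ (a * γ' + s n a) - ψ (a * γ')) / (s n a)) (Ioi 0) := by
        refine ContinuousOn.div ?_ (hsc n) (fun a ha => ne_of_lt (hsneg n a ha))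
        refine ContinuousOn.sub ?_ ((hψcont.comp (continuous_id.mul continuous_const)).continuousOn)
        exact hψcont.comp_continuousOn
          (((continuous_id.mul continuous_const).continuousOn).add (hsc n))
      exact (h1.aestronglyMeasurable measurableSet_Ioi).mul hρm
    · intro n
      filter_upwards [ae_restrict_mem measurableSet_Ioi] with a ha
      rw [Real.norm_eq_abs, abs_mul, abs_of_nonneg (hρnonneg a)]
      exact mul_le_mul_of_nonneg_right
        (Stmt12Aux.slope_abs_le hψlip (a * γ') (ne_of_lt (hsneg n a ha))) (hρnonneg a)
    · filter_upwards [ae_restrict_mem measurableSet_Ioi] with a ha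
      exact (Stmt12Aux.tendsto_slope_dm_seq hψconv hψlip (a * γ')
        (fun n => hsneg n a ha) (hs0 a ha)).mul_const (ρ a)
  -- relating K-increments to slope integrals
  have hKdiff : ∀ t : ℝ, t ≠ 0 →
      t * (∫ a in Ioi (0:ℝ), (ψ (a * γ + a * t) - ψ (a * γ)) / (a * t) * ρ a)
        = (∫ a in Ioi (0:ℝ), ψ (a * (γ + t)) / a * ρ a)
          - ∫ a in Ioi (0:ℝ), ψ (a * γ) / a * ρ a := by
    intro t ht
    rw [← integral_const_mul, ← integral_sub (hKI (γ + t)) (hKI γ)]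
    refine setIntegral_congr_fun measurableSet_Ioi fun a ha => ?_
    have ha0 : (0:ℝ) < a := ha
    rw [mul_add a γ t]
    field_simp
  -- minimality gives subgradient bounds
  have hminP : v - γ ≤ ∫ a in Ioi (0:ℝ), Stmt12Aux.dp ψ (a * γ) * ρ a := by
    refine le_of_tendsto_of_tendsto'
      (f := fun n : ℕ => v - γ - (1 / (n + 1)) / 2) ?_
      (hDCTp γ (fun n a => a * (1 / (n + 1)))
        (fun n => continuousOn_id.mul continuousOn_const)
        (fun n a ha => mul_pos ha (hupos n))
        (fun a ha => by simpa using (tendsto_const_nhds (x := a)).mul hu0)) ?_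
    · have := (tendsto_const_nhds (x := v - γ)).sub (hu0.div_const 2)
      simpa using this
    · intro n
      set t : ℝ := 1 / (n + 1) with htdef
      have ht : (0:ℝ) < t := hupos n
      have hmin := hγmin (γ + t)
      have hK := hKdiff t (ne_of_gt ht)
      set S : ℝ := ∫ a in Ioi (0:ℝ), (ψ (a * γ + a * t) - ψ (a * γ)) / (a * t) * ρ a with hS
      have h6 : (v - γ - t / 2) * t ≤ t * S := by
        rw [hK]
        nlinarith [hmin]
      have h7 : (v - γ - t / 2) * t ≤ S * t := by linarith [h6, mul_comm t S]
      exact le_of_mul_le_mul_right h7 ht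
  have hminN : (∫ a in Ioi (0:ℝ), Stmt12Aux.dm ψ (a * γ) * ρ a) ≤ v - γ := by
    refine le_of_tendsto_of_tendsto'
      (g := fun n : ℕ => v - γ - (-(1 / (n + 1))) / 2)
      (hDCTm γ (fun n a => a * (-(1 / (n + 1))))
        (fun n => continuousOn_id.mul continuousOn_const)
        (fun n a ha => mul_neg_of_pos_of_neg ha (neg_neg_iff_pos.mpr (hupos n)))
        (fun a ha => by simpa using (tendsto_const_nhds (x := a)).mul hu0.neg)) ?_ ?_
    · have := (tendsto_const_nhds (x := v - γ)).sub ((hu0.neg).div_const 2)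
      simpa using this
    · intro n
      set t : ℝ := -(1 / (n + 1)) with htdef
      have ht : t < 0 := neg_neg_iff_pos.mpr (hupos n)
      have hmin := hγmin (γ + t)
      have hK := hKdiff t (ne_of_lt ht)
      set S : ℝ := ∫ a in Ioi (0:ℝ), (ψ (a * γ + a * t) - ψ (a * γ)) / (a * t) * ρ a with hS
      have h6 : (v - γ - t / 2) * t ≤ t * S := by
        rw [hK]
        nlinarith [hmin]
      have h8 : S ≤ v - γ - t / 2 := by
        have h9 : t * S / t ≤ v - γ - t / 2 := (div_le_iff_of_neg ht).mpr h6
        rwa [mul_div_cancel_left₀ _ (ne_of_lt ht)] at h9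
      exact h8

  -- difference of g-integrals
  have hgdiff : ∀ γ' w : ℝ,
      (∫ a in Ioi (0:ℝ), (ψ (a * γ' + w) - ψ (a * γ')) * ρ a)
        = (∫ a in Ioi (0:ℝ), ψ (a * γ' + w) * ρ a) - ∫ a in Ioi (0:ℝ), ψ (a * γ') * ρ a := by
    intro γ' w
    rw [← integral_sub (hgI γ' w) (hγ0I γ')]
    refine setIntegral_congr_fun measurableSet_Ioi fun a _ => ?_
    ring
  -- the variational inequality holds at the minimizer
  have hVI : ∀ w : ℝ,
      (v - γ) * w + ∫ a in Ioi (0:ℝ), ψ (a * γ) * ρ a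
        ≤ ∫ a in Ioi (0:ℝ), ψ (a * γ + w) * ρ a := by
    intro w
    rcases lt_trichotomy w 0 with hw | hw | hw
    · have hpt : ∀ a ∈ Ioi (0:ℝ), w * (Stmt12Aux.dm ψ (a * γ) * ρ a)
          ≤ (ψ (a * γ + w) - ψ (a * γ)) * ρ a := by
        intro a ha
        have h1 := Stmt12Aux.sub_dm hψlip (x := a * γ) hw
        have h2 := mul_le_mul_of_nonneg_right h1 (hρnonneg a)
        calc w * (Stmt12Aux.dm ψ (a * γ) * ρ a) = (Stmt12Aux.dm ψ (a * γ) * w) * ρ a := by ring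
          _ ≤ (ψ (a * γ + w) - ψ (a * γ)) * ρ a := h2
      have hint : w * (∫ a in Ioi (0:ℝ), Stmt12Aux.dm ψ (a * γ) * ρ a)
          ≤ ∫ a in Ioi (0:ℝ), (ψ (a * γ + w) - ψ (a * γ)) * ρ a := by
        rw [← integral_const_mul]
        exact setIntegral_mono_on ((hdmI γ).const_mul w) (hdiffI γ w) measurableSet_Ioi hpt
      have h3 : (v - γ) * w ≤ w * ∫ a in Ioi (0:ℝ), Stmt12Aux.dm ψ (a * γ) * ρ a := by
        nlinarith [hminN, hw]
      rw [hgdiff γ w] at hint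
      linarith
    · subst hw
      simp
    · have hpt : ∀ a ∈ Ioi (0:ℝ), w * (Stmt12Aux.dp ψ (a * γ) * ρ a)
          ≤ (ψ (a * γ + w) - ψ (a * γ)) * ρ a := by
        intro a ha
        have h1 := Stmt12Aux.sub_dp hψlip (x := a * γ) hw
        have h2 := mul_le_mul_of_nonneg_right h1 (hρnonneg a)
        calc w * (Stmt12Aux.dp ψ (a * γ) * ρ a) = (Stmt12Aux.dp ψ (a * γ) * w) * ρ a := by ring
          _ ≤ (ψ (a * γ + w) - ψ (a * γ)) * ρ a := h2
      have hint : w * (∫ a in Ioi (0:ℝ), Stmt12Aux.dp ψ (a * γ) * ρ a)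
          ≤ ∫ a in Ioi (0:ℝ), (ψ (a * γ + w) - ψ (a * γ)) * ρ a := by
        rw [← integral_const_mul]
        exact setIntegral_mono_on ((hdpI γ).const_mul w) (hdiffI γ w) measurableSet_Ioi hpt
      have h3 : (v - γ) * w ≤ w * ∫ a in Ioi (0:ℝ), Stmt12Aux.dp ψ (a * γ) * ρ a := by
        nlinarith [hminP, hw]
      rw [hgdiff γ w] at hint
      linarith
  -- any solution of the VI satisfies the subgradient bounds
  have hVIbnd : ∀ γ' : ℝ,
      (∀ w : ℝ, (v - γ') * w + (∫ a in Ioi (0:ℝ), ψ (a * γ') * ρ a)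
        ≤ ∫ a in Ioi (0:ℝ), ψ (a * γ' + w) * ρ a) →
      v - γ' ≤ (∫ a in Ioi (0:ℝ), Stmt12Aux.dp ψ (a * γ') * ρ a) ∧
      (∫ a in Ioi (0:ℝ), Stmt12Aux.dm ψ (a * γ') * ρ a) ≤ v - γ' := by
    intro γ' hvi
    constructor
    · refine le_of_tendsto_of_tendsto' (f := fun _ : ℕ => v - γ') tendsto_const_nhds
        (hDCTp γ' (fun n _ => 1 / (n + 1)) (fun n => continuousOn_const)
          (fun n a _ => hupos n) (fun a _ => hu0)) ?_
      intro n
      set t : ℝ := 1 / (n + 1) with htdef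
      have ht : (0:ℝ) < t := hupos n
      have h1 := hvi t
      have h2 : ∫ a in Ioi (0:ℝ), (ψ (a * γ' + t) - ψ (a * γ')) / t * ρ a
          = (∫ a in Ioi (0:ℝ), (ψ (a * γ' + t) - ψ (a * γ')) * ρ a) / t := by
        rw [← integral_div]
        refine setIntegral_congr_fun measurableSet_Ioi fun a _ => ?_
        ring
      show v - γ' ≤ ∫ a in Ioi (0:ℝ), (ψ (a * γ' + t) - ψ (a * γ')) / t * ρ a
      rw [h2, hgdiff γ' t, le_div_iff₀ ht]
      linarith
    · refine le_of_tendsto_of_tendsto' (g := fun _ : ℕ => v - γ')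
        (hDCTm γ' (fun n _ => -(1 / (n + 1))) (fun n => continuousOn_const)
          (fun n a _ => neg_neg_iff_pos.mpr (hupos n)) (fun a _ => by simpa using hu0.neg))
        tendsto_const_nhds ?_
      intro n
      set t : ℝ := -(1 / (n + 1)) with htdef
      have ht : t < 0 := neg_neg_iff_pos.mpr (hupos n)
      have h1 := hvi t
      have h2 : ∫ a in Ioi (0:ℝ), (ψ (a * γ' + t) - ψ (a * γ')) / t * ρ a
          = (∫ a in Ioi (0:ℝ), (ψ (a * γ' + t) - ψ (a * γ')) * ρ a) / t := by
        rw [← integral_div]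
        refine setIntegral_congr_fun measurableSet_Ioi fun a _ => ?_
        ring
      have h3 : ((∫ a in Ioi (0:ℝ), (ψ (a * γ' + t) - ψ (a * γ')) * ρ a) / t) ≤ v - γ' := by
        rw [div_le_iff_of_neg ht, hgdiff γ' t]
        linarith
      show (∫ a in Ioi (0:ℝ), (ψ (a * γ' + t) - ψ (a * γ')) / t * ρ a) ≤ v - γ'
      rw [h2]
      exact h3
  -- monotone comparison of subgradient integrals
  have hPN : ∀ γ₁ γ₂ : ℝ, γ₁ < γ₂ →
      (∫ a in Ioi (0:ℝ), Stmt12Aux.dp ψ (a * γ₁) * ρ a)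
        ≤ ∫ a in Ioi (0:ℝ), Stmt12Aux.dm ψ (a * γ₂) * ρ a := by
    intro γ₁ γ₂ h12
    refine setIntegral_mono_on (hdpI γ₁) (hdmI γ₂) measurableSet_Ioi fun a ha => ?_
    have ha0 : (0:ℝ) < a := ha
    exact mul_le_mul_of_nonneg_right
      (Stmt12Aux.dp_le_dm hψconv hψlip (by nlinarith : a * γ₁ < a * γ₂)) (hρnonneg a)
  refine ⟨hJstrict, hcoer, γ, hVI, fun γ' hγ' => ?_⟩
  by_contra hne
  have hb1 := hVIbnd γ' hγ'
  have hb2 := hVIbnd γ hVI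
  rcases lt_or_gt_of_ne hne with h | h
  · have := (hb1.1.trans (hPN γ' γ h)).trans hb2.2
    linarith
  · have := (hb2.1.trans (hPN γ γ' h)).trans hb1.2
    linarith
end

section
/- Velocity-force characterization for the constant-force potential ψ(u) = |u|: Let ρ_∞ ∈ L¹([0,∞)) be nonnegative and set μ_∞ := ∫₀^∞ ρ_∞(a) da, and let v_∞ ∈ ℝ. Suppose γ ∈ ℝ satisfies, for all w ∈ ℝ, the variational inequality (v_∞ − γ)w + ∫₀^∞ |a γ| ρ_∞(a) da ≤ ∫₀^∞ |w + a γ| ρ_∞(a) da. Then: (i) if γ > 0 then v_∞ = γ + μ_∞; (ii) if γ < 0 then v_∞ = γ − μ_∞; (iii) if γ = 0 then v_∞ ∈ [−μ_∞, μ_∞]. Conversely, (iv) if v_∞ ∈ [−μ_∞, μ_∞] then γ = 0 is the unique solution of the variational inequality. -/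
open MeasureTheory Set Filter Topology

/-- The limiting variational inequality for `ψ(u) = |u|`. -/
def AbsVI (ρinf : ℝ → ℝ) (vinf γ : ℝ) : Prop :=
  ∀ w : ℝ,
    (vinf - γ) * w + ∫ a in Set.Ioi (0:ℝ), |a * γ| * ρinf a
      ≤ ∫ a in Set.Ioi (0:ℝ), |w + a * γ| * ρinf a

/-- integrability of `|c + a d| ρ a` on `(0,∞)`. -/
lemma absvi_integrable (ρinf : ℝ → ℝ) (hρnonneg : ∀ a, 0 ≤ ρinf a)
    (hρint : IntegrableOn ρinf (Ioi 0))
    (hρint2 : IntegrableOn (fun a => a * ρinf a) (Ioi 0)) (c d : ℝ) :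
    IntegrableOn (fun a => |c + a * d| * ρinf a) (Ioi 0) := by
  have hg : IntegrableOn (fun a => |c| * ρinf a + |d| * (a * ρinf a)) (Ioi 0) :=
    (hρint.const_mul _).add (hρint2.const_mul _)
  refine Integrable.mono' hg ?_ ?_
  · exact ((continuous_const.add (continuous_id.mul continuous_const)).abs.aestronglyMeasurable).mul
      hρint.aestronglyMeasurable
  · filter_upwards [ae_restrict_mem measurableSet_Ioi] with a (ha : 0 < a)
    have h1 : |c + a * d| ≤ |c| + a * |d| := by
      calc |c + a * d| ≤ |c| + |a * d| := abs_add_le _ _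
        _ = |c| + a * |d| := by rw [abs_mul, abs_of_pos ha]
    have hρ := hρnonneg a
    rw [Real.norm_eq_abs, abs_of_nonneg (mul_nonneg (abs_nonneg _) hρ)]
    nlinarith [abs_nonneg (c + a * d)]

/-- symmetry of the VI under negation. -/
lemma absvi_neg (ρinf : ℝ → ℝ) (vinf γ : ℝ) (h : AbsVI ρinf vinf γ) :
    AbsVI ρinf (-vinf) (-γ) := by
  intro w
  have h1 := h (-w)
  have e1 : (fun a => |a * -γ| * ρinf a) = fun a => |a * γ| * ρinf a := by
    funext a; rw [mul_neg, abs_neg]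
  have e2 : (fun a => |w + a * -γ| * ρinf a) = fun a => |-w + a * γ| * ρinf a := by
    funext a; rw [mul_neg, ← abs_neg]; ring_nf
  rw [e1, e2]
  calc (-vinf - -γ) * w + ∫ a in Ioi (0:ℝ), |a * γ| * ρinf a
      = (vinf - γ) * (-w) + ∫ a in Ioi (0:ℝ), |a * γ| * ρinf a := by ring_nf
    _ ≤ ∫ a in Ioi (0:ℝ), |-w + a * γ| * ρinf a := h1

/-- the key case `γ > 0`. -/
lemma absvi_pos (ρinf : ℝ → ℝ) (hρnonneg : ∀ a, 0 ≤ ρinf a)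
    (hρint : IntegrableOn ρinf (Ioi 0))
    (hρint2 : IntegrableOn (fun a => a * ρinf a) (Ioi 0))
    (vinf μinf : ℝ) (hμ : μinf = ∫ a in Ioi (0:ℝ), ρinf a)
    (γ : ℝ) (hγ : 0 < γ) (h : AbsVI ρinf vinf γ) : vinf = γ + μinf := by
  set A := ∫ a in Ioi (0:ℝ), a * ρinf a with hA
  -- compute ∫ |aγ| ρ = γ A
  have hC : (∫ a in Ioi (0:ℝ), |a * γ| * ρinf a) = γ * A := by
    rw [hA, ← integral_const_mul]
    refine setIntegral_congr_fun measurableSet_Ioi (fun a (ha : 0 < a) => ?_)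
    rw [abs_of_nonneg (mul_nonneg ha.le hγ.le)]; ring
  -- upper bound from w = 1
  have hub : vinf - γ ≤ μinf := by
    have h1 := h 1
    have e : (∫ a in Ioi (0:ℝ), |1 + a * γ| * ρinf a)
        = μinf + γ * A := by
      have e1 : (∫ a in Ioi (0:ℝ), |1 + a * γ| * ρinf a)
          = ∫ a in Ioi (0:ℝ), (ρinf a + γ * (a * ρinf a)) := by
        refine setIntegral_congr_fun measurableSet_Ioi (fun a (ha : 0 < a) => ?_)
        rw [abs_of_nonneg (by positivity)]; ring
      rw [e1, integral_add hρint (hρint2.const_mul γ), integral_const_mul, hμ, hA]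
    rw [hC, e] at h1
    linarith
  -- lower bound: for every ε > 0, μ - 2 ∫_{(0,ε]} ρ ≤ vinf - γ
  have hlb : ∀ ε : ℝ, 0 < ε → μinf - 2 * (∫ a in Ioc (0:ℝ) ε, ρinf a) ≤ vinf - γ := by
    intro ε hε
    set I := ∫ a in Ioc (0:ℝ) ε, ρinf a with hI
    have h1 := h (-(γ * ε))
    have hind : IntegrableOn ((Ioc (0:ℝ) ε).indicator ρinf) (Ioi 0) :=
      hρint.indicator measurableSet_Ioc
    have hgint : IntegrableOn
        (fun a => γ * (a * ρinf a) + (-(γ * ε)) * ρinf a + 2 * (γ * ε) * (Ioc (0:ℝ) ε).indicator ρinf a)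
        (Ioi 0) :=
      (((hρint2.const_mul γ).add (hρint.const_mul (-(γ * ε)))).add (hind.const_mul _))
    have hfint : IntegrableOn (fun a => |-(γ * ε) + a * γ| * ρinf a) (Ioi 0) :=
      absvi_integrable ρinf hρnonneg hρint hρint2 _ _
    have hmono : (∫ a in Ioi (0:ℝ), |-(γ * ε) + a * γ| * ρinf a)
        ≤ ∫ a in Ioi (0:ℝ),
            (γ * (a * ρinf a) + (-(γ * ε)) * ρinf a + 2 * (γ * ε) * (Ioc (0:ℝ) ε).indicator ρinf a) := by
      refine setIntegral_mono_on hfint hgint measurableSet_Ioi (fun a (ha : 0 < a) => ?_)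
      have hρ := hρnonneg a
      by_cases hc : a ≤ ε
      · have : (Ioc (0:ℝ) ε).indicator ρinf a = ρinf a := by
          rw [indicator_of_mem (show a ∈ Ioc (0:ℝ) ε from ⟨ha, hc⟩)]
        rw [this]
        have habs : |-(γ * ε) + a * γ| ≤ γ * a + γ * ε := by
          rw [abs_le]; constructor <;> nlinarith
        nlinarith
      · have : (Ioc (0:ℝ) ε).indicator ρinf a = 0 := by
          rw [indicator_of_notMem (fun hm => hc hm.2)]
        rw [this]
        have habs : |-(γ * ε) + a * γ| = a * γ - γ * ε := by
          rw [abs_of_nonneg (by nlinarith)]; ring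
        rw [habs]; nlinarith
    have hgval : (∫ a in Ioi (0:ℝ),
        (γ * (a * ρinf a) + (-(γ * ε)) * ρinf a + 2 * (γ * ε) * (Ioc (0:ℝ) ε).indicator ρinf a))
        = γ * A - γ * ε * μinf + 2 * (γ * ε) * I := by
      have hi1 : IntegrableOn (fun a => γ * (a * ρinf a) + -(γ * ε) * ρinf a) (Ioi 0) := by
        exact (hρint2.const_mul γ).add (hρint.const_mul (-(γ * ε)))
      rw [integral_add hi1 (hind.const_mul _),
        integral_add (hρint2.const_mul γ) (hρint.const_mul (-(γ * ε))),
        integral_const_mul, integral_const_mul, integral_const_mul,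
        setIntegral_indicator measurableSet_Ioc,
        inter_eq_self_of_subset_right Ioc_subset_Ioi_self, hμ, hA, hI]
      ring
    rw [hC] at h1
    have : (vinf - γ) * (-(γ * ε)) + γ * A ≤ γ * A - γ * ε * μinf + 2 * (γ * ε) * I :=
      le_trans h1 (le_trans hmono (le_of_eq hgval))
    have hγε : 0 < γ * ε := mul_pos hγ hε
    nlinarith
  -- limit ε → 0
  have hlim : Tendsto (fun n : ℕ => ∫ a in Ioc (0:ℝ) (1 / (n + 1)), ρinf a) atTop (𝓝 0) := by
    have hanti : Antitone (fun n : ℕ => Ioc (0:ℝ) (1 / (n + 1))) := by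
      intro m n hmn
      refine Ioc_subset_Ioc_right (one_div_le_one_div_of_le (by positivity) ?_)
      have : (m : ℝ) ≤ n := Nat.cast_le.mpr hmn
      linarith
    have hiInter : (⋂ n : ℕ, Ioc (0:ℝ) (1 / (n + 1))) = ∅ := by
      rw [eq_empty_iff_forall_notMem]
      intro x hx
      obtain ⟨n, hn⟩ := exists_nat_one_div_lt (mem_iInter.mp hx 0).1
      exact absurd (mem_iInter.mp hx n).2 (not_le.mpr hn)
    have hfi : ∃ n : ℕ, IntegrableOn ρinf (Ioc (0:ℝ) (1 / (n + 1))) volume :=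
      ⟨0, hρint.mono_set Ioc_subset_Ioi_self⟩
    have := tendsto_setIntegral_of_antitone (f := ρinf) (μ := volume)
      (fun n : ℕ => measurableSet_Ioc) hanti hfi
    rw [hiInter] at this
    simpa using this
  have hlb2 : μinf ≤ vinf - γ := by
    have htend : Tendsto (fun n : ℕ => μinf - 2 * (∫ a in Ioc (0:ℝ) (1 / (n + 1)), ρinf a))
        atTop (𝓝 (μinf - 2 * 0)) := tendsto_const_nhds.sub (hlim.const_mul 2)
    have := le_of_tendsto htend (Eventually.of_forall
      (fun n => hlb (1 / (n + 1)) (by positivity)))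
    linarith
  linarith

/-- Velocity-force characterization for the constant-force potential `ψ(u) = |u|`, with
`μ_∞ = ∫₀^∞ ρ_∞`: (i) `γ > 0 → v_∞ = γ + μ_∞`; (ii) `γ < 0 → v_∞ = γ − μ_∞`;
(iii) `γ = 0 → v_∞ ∈ [−μ_∞, μ_∞]`; and conversely (iv) if `v_∞ ∈ [−μ_∞, μ_∞]` then
`γ = 0` is the unique solution of the variational inequality. -/
theorem stmt_16
    (ρinf : ℝ → ℝ)
    (hρnonneg : ∀ a, 0 ≤ ρinf a)
    (hρint : IntegrableOn ρinf (Ioi 0))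
    (hρint2 : IntegrableOn (fun a => a * ρinf a) (Ioi 0))
    (vinf μinf : ℝ)
    (hμ : μinf = ∫ a in Ioi (0:ℝ), ρinf a) :
    (∀ γ : ℝ, AbsVI ρinf vinf γ →
      (0 < γ → vinf = γ + μinf) ∧
      (γ < 0 → vinf = γ - μinf) ∧
      (γ = 0 → vinf ∈ Icc (-μinf) μinf)) ∧
    (vinf ∈ Icc (-μinf) μinf →
      AbsVI ρinf vinf 0 ∧ ∀ γ : ℝ, AbsVI ρinf vinf γ → γ = 0) := by
  have habs0 : ∀ w : ℝ, (∫ a in Ioi (0:ℝ), |w + a * 0| * ρinf a) = |w| * μinf := by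
    intro w
    rw [hμ, ← integral_const_mul]
    refine setIntegral_congr_fun measurableSet_Ioi (fun a _ => ?_)
    rw [mul_zero, add_zero]
  have hz0 : (∫ a in Ioi (0:ℝ), |a * (0:ℝ)| * ρinf a) = 0 := by
    simp
  have hneg : ∀ γ : ℝ, AbsVI ρinf vinf γ → γ < 0 → vinf = γ - μinf := by
    intro γ h hγ
    have := absvi_pos ρinf hρnonneg hρint hρint2 (-vinf) μinf hμ (-γ) (by linarith)
      (absvi_neg ρinf vinf γ h)
    linarith
  have hzero : ∀ γ : ℝ, AbsVI ρinf vinf γ → γ = 0 → vinf ∈ Icc (-μinf) μinf := by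
    intro γ h hγ
    subst hγ
    have h1 := h 1
    have h2 := h (-1)
    rw [hz0, habs0 1] at h1
    rw [hz0, habs0 (-1)] at h2
    simp only [abs_one, abs_neg] at h1 h2
    constructor <;> nlinarith
  refine ⟨fun γ h => ⟨fun hγ => absvi_pos ρinf hρnonneg hρint hρint2 vinf μinf hμ γ hγ h,
    hneg γ h, hzero γ h⟩, fun hv => ⟨?_, fun γ h => ?_⟩⟩
  · intro w
    rw [hz0, habs0 w]
    have hvw : vinf * w ≤ |vinf| * |w| := by
      calc vinf * w ≤ |vinf * w| := le_abs_self _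
        _ = |vinf| * |w| := abs_mul _ _
    have hv' : |vinf| ≤ μinf := abs_le.mpr ⟨by linarith [hv.1], hv.2⟩
    have := mul_le_mul_of_nonneg_right hv' (abs_nonneg w)
    nlinarith [abs_nonneg w]
  · rcases lt_trichotomy γ 0 with hγ | hγ | hγ
    · exfalso
      have := hneg γ h hγ
      have hv1 := hv.1
      linarith
    · exact hγ
    · exfalso
      have := absvi_pos ρinf hρnonneg hρint hρint2 vinf μinf hμ γ hγ h
      have hv2 := hv.2
      linarith
end

section
/- Explicit kinematic solution for ψ(u) = |u| in the moving regime: Let ρ_∞ ∈ L¹([0,∞)) be positive and monotone nonincreasing with ∫₀^∞ a ρ_∞(a) da < ∞, set μ_∞(t) := ∫₀^t ρ_∞(a) da and μ_∞ := ∫₀^∞ ρ_∞(a) da, and let v_∞ ∉ [−μ_∞, μ_∞]. Then the Lipschitz function z : [0,∞) → ℝ with z(0) = z⁰ satisfying, for all t > 0 and all w ∈ ℝ, the variational inequality (v_∞ − ż(t)) w + ∫₀^t ρ_∞(a) |z(t) − z(t−a)| da ≤ ∫₀^t ρ_∞(a) |z(t) − z(t−a) + w| da, is given by z(t) = z⁰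 + ∫₀^t ( v_∞ − sgn(v_∞) μ_∞(τ) ) dτ = z⁰ + γ t + sgn(v_∞) ∫₀^t ∫_τ^∞ ρ_∞(a) da dτ, where γ := v_∞ − sgn(v_∞) μ_∞. -/
open MeasureTheory Set Filter

/-- Truncated mass `μ_∞(t) = ∫₀^t ρ_∞(a) da`. -/
noncomputable def truncMass (ρinf : ℝ → ℝ) (t : ℝ) : ℝ :=
  ∫ a in Set.Ioc (0:ℝ) t, ρinf a

/-- `z` is a Lipschitz solution, with `z(0) = z0`, of the variational inequality for the
potential `ψ(u) = |u|` and the kernel `ρ(a,t) = ρ_∞(a)·1_{a<t}`. -/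
def SolAbsVI (ρinf : ℝ → ℝ) (vinf z0 : ℝ) (z : ℝ → ℝ) : Prop :=
  (∃ K : NNReal, LipschitzOnWith K z (Set.Ici 0)) ∧
  z 0 = z0 ∧
  ∀ᵐ t ∂(MeasureTheory.volume.restrict (Set.Ioi (0:ℝ))),
    DifferentiableAt ℝ z t ∧
    ∀ w : ℝ,
      (vinf - deriv z t) * w + ∫ a in Set.Ioc (0:ℝ) t, ρinf a * |z t - z (t - a)|
        ≤ ∫ a in Set.Ioc (0:ℝ) t, ρinf a * |z t - z (t - a) + w|



open Topology
lemma seq_slope {g : ℝ → ℝ} {t d : ℝ} (h : HasDerivAt g d t) :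
    Tendsto (fun n : ℕ => (g (t + 1/(n+1)) - g t) * (n+1)) atTop (𝓝 d) := by
  have hs := hasDerivAt_iff_tendsto_slope.1 h
  have hpos : ∀ n : ℕ, (0:ℝ) < 1/(n+1) := fun n => by positivity
  have htend : Tendsto (fun n : ℕ => t + 1/(n+1)) atTop (𝓝[≠] t) := by
    apply tendsto_nhdsWithin_of_tendsto_nhds_of_eventually_within
    · have : Tendsto (fun n : ℕ => 1/((n:ℝ)+1)) atTop (𝓝 0) :=
        tendsto_one_div_add_atTop_nhds_zero_nat
      simpa using tendsto_const_nhds.add this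
    · filter_upwards with n
      simp only [mem_compl_iff, mem_singleton_iff]
      have := hpos n; intro hc; nlinarith
  have hcomp := hs.comp htend
  refine hcomp.congr fun n => ?_
  have hne : (1:ℝ)/(n+1) ≠ 0 := (hpos n).ne'
  simp only [Function.comp_apply, slope_def_field]
  rw [add_sub_cancel_left, div_eq_iff hne]
  field_simp

lemma lipschitz_ftc {K : NNReal} {f : ℝ → ℝ} (hf : LipschitzWith K f) {a b : ℝ} (hab : a ≤ b)
    (hd : ∀ᵐ t ∂(volume.restrict (Set.Ioc a b)), DifferentiableAt ℝ f t) :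
    ∫ t in Set.Ioc a b, deriv f t = f b - f a := by
  have hcont : Continuous f := hf.continuous
  set F : ℕ → ℝ → ℝ := fun n t => (f (t + 1/(n+1)) - f t) * (n+1) with hF
  have hmeasF : ∀ n : ℕ, AEStronglyMeasurable (F n) (volume.restrict (Ioc a b)) := fun n =>
    (((hcont.comp (continuous_id.add continuous_const)).sub hcont).mul
      continuous_const).aestronglyMeasurable.restrict
  have hboundF : ∀ n : ℕ, ∀ᵐ t ∂(volume.restrict (Ioc a b)), ‖F n t‖ ≤ (K:ℝ) := by
    intro n
    filter_upwards with t
    have hpos : (0:ℝ) < 1/(n+1) := by positivity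
    have h1 : |f (t + 1/(n+1)) - f t| ≤ K * (1/(n+1)) := by
      have := hf.dist_le_mul (t + 1/(n+1)) t
      rw [Real.dist_eq, Real.dist_eq] at this
      have habs : |(1:ℝ)/(n+1)| = 1/(n+1) := abs_of_pos hpos
      simp only [add_sub_cancel_left] at this
      rw [habs] at this
      simpa using this
    have : ‖F n t‖ = |f (t + 1/(n+1)) - f t| * (n+1) := by
      rw [hF]; simp [abs_mul, abs_of_nonneg (by positivity : (0:ℝ) ≤ (n:ℝ)+1)]
    rw [this]
    calc |f (t + 1/(n+1)) - f t| * (n+1) ≤ (K * (1/(n+1))) * (n+1) := by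
          apply mul_le_mul_of_nonneg_right h1 (by positivity)
      _ = K := by field_simp
  have hbi : Integrable (fun _ : ℝ => (K:ℝ)) (volume.restrict (Ioc a b)) := by
    apply integrableOn_const measure_Ioc_lt_top.ne
  have hlim : ∀ᵐ t ∂(volume.restrict (Ioc a b)),
      Tendsto (fun n => F n t) atTop (𝓝 (deriv f t)) := by
    filter_upwards [hd] with t ht using seq_slope ht.hasDerivAt
  have hdct := MeasureTheory.tendsto_integral_of_dominated_convergence
    (μ := volume.restrict (Ioc a b)) (F := F) (f := fun t => deriv f t)
    (fun _ => (K:ℝ)) hmeasF hbi hboundF hlim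
  -- compute the integrals of F n
  set G : ℝ → ℝ := fun u => ∫ x in a..u, f x with hG
  have hGd : ∀ u : ℝ, HasDerivAt G (f u) u := fun u =>
    intervalIntegral.integral_hasDerivAt_right (hcont.intervalIntegrable _ _)
      (hcont.stronglyMeasurable.stronglyMeasurableAtFilter) hcont.continuousAt
  have hcalc : ∀ n : ℕ, ∫ t in Ioc a b, F n t
      = (G (b + 1/(n+1)) - G b) * (n+1) - (G (a + 1/(n+1)) - G a) * (n+1) := by
    intro n
    set h : ℝ := 1/(n+1) with hh
    have i1 : IntervalIntegrable (fun t => f (t + h)) volume a b :=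
      (hcont.comp (continuous_id.add continuous_const)).intervalIntegrable _ _
    have i2 : IntervalIntegrable f volume a b := hcont.intervalIntegrable _ _
    rw [← intervalIntegral.integral_of_le hab]
    have : (∫ t in a..b, F n t) = ((∫ t in a..b, f (t + h)) - ∫ t in a..b, f t) * (n+1) := by
      rw [← intervalIntegral.integral_sub i1 i2, ← intervalIntegral.integral_mul_const]
    rw [this, intervalIntegral.integral_comp_add_right f h]
    have e1 : G (b + h) - G (a + h) = ∫ x in (a+h)..(b+h), f x := by
      rw [hG]
      exact intervalIntegral.integral_interval_sub_left
        (hcont.intervalIntegrable _ _) (hcont.intervalIntegrable _ _)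
    have e2 : G b - G a = ∫ t in a..b, f t := by
      rw [hG]
      simp [intervalIntegral.integral_same]
    rw [← e1, ← e2]; ring
  have hlim2 : Tendsto (fun n => ∫ t in Ioc a b, F n t) atTop (𝓝 (f b - f a)) := by
    have := (seq_slope (hGd b)).sub (seq_slope (hGd a))
    refine Tendsto.congr (fun n => (hcalc n).symm) this
  exact tendsto_nhds_unique hdct hlim2

section helpers
variable {ρinf : ℝ → ℝ}

lemma tm_nonneg (hρnn : ∀ a ∈ Set.Ioi (0:ℝ), 0 ≤ ρinf a) (τ : ℝ) :
    0 ≤ truncMass ρinf τ :=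
  setIntegral_nonneg measurableSet_Ioc (fun a ha => hρnn a ha.1)

lemma tm_mono (hρint : IntegrableOn ρinf (Set.Ioi 0))
    (hρnn : ∀ a ∈ Set.Ioi (0:ℝ), 0 ≤ ρinf a) : Monotone (truncMass ρinf) := by
  intro x y hxy
  refine setIntegral_mono_set (hρint.mono_set Ioc_subset_Ioi_self)
    (((ae_restrict_mem measurableSet_Ioc).mono fun a ha => hρnn a ha.1))
    (HasSubset.Subset.eventuallyLE (Ioc_subset_Ioc_right hxy))

lemma tm_le (hρint : IntegrableOn ρinf (Set.Ioi 0))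
    (hρnn : ∀ a ∈ Set.Ioi (0:ℝ), 0 ≤ ρinf a) (τ : ℝ) :
    truncMass ρinf τ ≤ ∫ a in Set.Ioi 0, ρinf a := by
  refine setIntegral_mono_set hρint
    (((ae_restrict_mem measurableSet_Ioi).mono fun a ha => hρnn a ha))
    (HasSubset.Subset.eventuallyLE Ioc_subset_Ioi_self)

lemma tm_tendsto (hρint : IntegrableOn ρinf (Set.Ioi 0)) :
    Tendsto (fun n : ℕ => truncMass ρinf (1/(n+1))) atTop (𝓝 0) := by
  have heq : ∀ n : ℕ, truncMass ρinf (1/(n+1))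
      = ∫ a in Set.Ioi (0:ℝ), (Set.Ioc (0:ℝ) (1/(n+1))).indicator ρinf a := by
    intro n
    rw [truncMass, setIntegral_indicator measurableSet_Ioc,
      Set.inter_eq_right.2 Ioc_subset_Ioi_self]
  have hdct := MeasureTheory.tendsto_integral_of_dominated_convergence
    (μ := volume.restrict (Set.Ioi 0))
    (F := fun n : ℕ => (Set.Ioc (0:ℝ) (1/(n+1))).indicator ρinf)
    (f := fun _ => (0:ℝ)) (fun a => ‖ρinf a‖)
    (fun n => hρint.aestronglyMeasurable.indicator measurableSet_Ioc)
    hρint.norm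
    (fun n => Eventually.of_forall fun a => norm_indicator_le_norm_self _ _)
    ?_
  · refine Tendsto.congr (fun n => (heq n).symm) ?_
    simpa using hdct
  · filter_upwards [ae_restrict_mem measurableSet_Ioi] with a ha
    have : ∀ᶠ n : ℕ in atTop, (1:ℝ)/(n+1) < a :=
      tendsto_one_div_add_atTop_nhds_zero_nat.eventually_lt_const ha
    refine Tendsto.congr' ?_ tendsto_const_nhds
    filter_upwards [this] with n hn
    rw [Set.indicator_of_notMem]
    intro hmem
    exact absurd hmem.2 (not_le.2 hn)

lemma tm_small (hρint : IntegrableOn ρinf (Set.Ioi 0)) {η : ℝ} (hη : 0 < η) :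
    ∃ τ0 > (0:ℝ), truncMass ρinf τ0 ≤ η := by
  have := (tm_tendsto hρint).eventually_lt_const hη
  rcases this.exists with ⟨n, hn⟩
  exact ⟨1/(n+1), by positivity, hn.le⟩

lemma integrable_mul_cont (hρint : IntegrableOn ρinf (Set.Ioi 0))
    {q : ℝ → ℝ} (hq : Continuous q) (t : ℝ) :
    IntegrableOn (fun a => ρinf a * q a) (Set.Ioc 0 t) := by
  obtain ⟨C, hC⟩ := (isCompact_Icc (a := (0:ℝ)) (b := t)).exists_bound_of_continuousOn
    hq.continuousOn
  have hρ : IntegrableOn ρinf (Set.Ioc 0 t) := hρint.mono_set Ioc_subset_Ioi_self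
  refine Integrable.mono' (hρ.norm.mul_const C)
    (hρ.aestronglyMeasurable.mul hq.aestronglyMeasurable.restrict) ?_
  filter_upwards [ae_restrict_mem measurableSet_Ioc] with a ha
  have haI : a ∈ Set.Icc 0 t := ⟨ha.1.le, ha.2⟩
  rw [norm_mul]
  exact mul_le_mul_of_nonneg_left (hC a haI) (norm_nonneg _)

end helpers

lemma main_pos (ρinf : ℝ → ℝ)
    (hρint : IntegrableOn ρinf (Set.Ioi 0))
    (hρnn : ∀ a ∈ Set.Ioi (0:ℝ), 0 ≤ ρinf a)
    (vinf z0 μinf : ℝ) (hμ : μinf = ∫ a in Set.Ioi (0:ℝ), ρinf a)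
    (hv : μinf < vinf)
    (z : ℝ → ℝ) (hz : SolAbsVI ρinf vinf z0 z) {t : ℝ} (ht : 0 ≤ t) :
    z t = z0 + ∫ τ in Set.Ioc (0:ℝ) t, (vinf - truncMass ρinf τ) := by
  obtain ⟨⟨K, hK⟩, hz0, hae⟩ := hz
  set δ := vinf - μinf with hδ
  have hδpos : 0 < δ := sub_pos.2 hv
  -- Lipschitz extension of `z` to all of `ℝ`
  set Z : ℝ → ℝ := fun x => z (max x 0) with hZdef
  have hZlip : LipschitzWith K Z := by
    refine LipschitzWith.of_dist_le_mul fun x y => ?_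
    calc dist (Z x) (Z y) ≤ K * dist (max x 0) (max y 0) :=
          hK.dist_le_mul _ (le_max_right x 0) _ (le_max_right y 0)
      _ ≤ K * dist x y := by
          refine mul_le_mul_of_nonneg_left ?_ K.coe_nonneg
          rw [Real.dist_eq, Real.dist_eq]
          exact abs_max_sub_max_le_abs x y 0
  have hZeq : ∀ x : ℝ, 0 ≤ x → Z x = z x := fun x hx => by
    rw [hZdef]; simp [max_eq_left hx]
  have hZz : ∀ x : ℝ, 0 < x → z =ᶠ[nhds x] Z := fun x hx => by
    filter_upwards [Ioi_mem_nhds hx] with y hy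
    exact (hZeq y (le_of_lt hy)).symm
  have hderivEq : ∀ x : ℝ, 0 < x → deriv z x = deriv Z x :=
    fun x hx => (hZz x hx).deriv_eq
  -- integrability of the VI integrands
  have hρIoc : ∀ u : ℝ, IntegrableOn ρinf (Set.Ioc 0 u) :=
    fun u => hρint.mono_set Ioc_subset_Ioi_self
  have hint : ∀ τ > (0:ℝ), ∀ w : ℝ,
      IntegrableOn (fun a => ρinf a * |z τ - z (τ - a) + w|) (Set.Ioc 0 τ) := by
    intro τ hτ w
    have hq : Continuous (fun a : ℝ => |z τ - Z (τ - a) + w|) :=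
      ((continuous_const.sub (hZlip.continuous.comp
        (continuous_const.sub continuous_id))).add continuous_const).abs
    refine (integrable_mul_cont hρint hq τ).congr_fun ?_ measurableSet_Ioc
    intro a ha
    simp only [hZeq (τ - a) (by linarith [ha.2] : (0:ℝ) ≤ τ - a)]
  -- Step 1a : lower bound on the derivative
  have key1 : ∀ᵐ τ ∂(volume.restrict (Set.Ioi (0:ℝ))),
      vinf - truncMass ρinf τ ≤ deriv z τ := by
    filter_upwards [hae, ae_restrict_mem measurableSet_Ioi] with τ hvi' hτ
    obtain ⟨hdiff, hvi⟩ := hvi'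
    have hvi1 := hvi 1
    have hIc := hint τ hτ 0
    simp only [add_zero] at hIc
    have hIc1 := hint τ hτ 1
    have hmono : (∫ a in Set.Ioc (0:ℝ) τ, ρinf a * |z τ - z (τ - a) + 1|)
        ≤ (∫ a in Set.Ioc (0:ℝ) τ, ρinf a * |z τ - z (τ - a)|) + truncMass ρinf τ := by
      rw [truncMass, ← integral_add hIc (hρIoc τ)]
      refine setIntegral_mono_on hIc1 (hIc.add (hρIoc τ)) measurableSet_Ioc ?_
      intro a ha
      have hρa := hρnn a ha.1
      have habs : |z τ - z (τ - a) + 1| ≤ |z τ - z (τ - a)| + 1 := by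
        calc |z τ - z (τ - a) + 1| ≤ |z τ - z (τ - a)| + |1| := abs_add_le _ _
          _ = |z τ - z (τ - a)| + 1 := by rw [abs_one]
      nlinarith [mul_le_mul_of_nonneg_left habs hρa]
    linarith [hvi1, hmono]
  -- a.e. differentiability and derivative bound for Z
  have hZdiff : ∀ᵐ τ ∂(volume.restrict (Set.Ioi (0:ℝ))), DifferentiableAt ℝ Z τ := by
    filter_upwards [hae, ae_restrict_mem measurableSet_Ioi] with τ h hτ
    exact h.1.congr_of_eventuallyEq (hZz τ hτ).symm
  have hδle : ∀ᵐ τ ∂(volume.restrict (Set.Ioi (0:ℝ))), δ ≤ deriv Z τ := by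
    filter_upwards [key1, ae_restrict_mem measurableSet_Ioi] with τ h hτ
    rw [← hderivEq τ hτ]
    have h2 := tm_le hρint hρnn τ
    rw [← hμ] at h2
    linarith
  have hZint : ∀ s u : ℝ, IntegrableOn (deriv Z) (Set.Ioc s u) := by
    intro s u
    refine Integrable.mono' (g := fun _ => (K:ℝ))
      (integrableOn_const measure_Ioc_lt_top.ne)
      ((measurable_deriv Z).aestronglyMeasurable.restrict)
      (Eventually.of_forall fun τ => ?_)
    exact norm_deriv_le_of_lipschitz hZlip
  -- Step 1b : growth estimate
  have hgrow : ∀ s u : ℝ, 0 ≤ s → s ≤ u → δ * (u - s) ≤ z u - z s := by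
    intro s u hs hsu
    have hsub : Set.Ioc s u ⊆ Set.Ioi (0:ℝ) := fun x hx => lt_of_le_of_lt hs hx.1
    have hd' : ∀ᵐ τ ∂(volume.restrict (Set.Ioc s u)), DifferentiableAt ℝ Z τ :=
      ae_mono (Measure.restrict_mono hsub le_rfl) hZdiff
    have hftc := lipschitz_ftc hZlip hsu hd'
    rw [hZeq u (hs.trans hsu), hZeq s hs] at hftc
    rw [← hftc]
    have hlow : ∀ᵐ τ ∂(volume.restrict (Set.Ioc s u)), δ ≤ deriv Z τ :=
      ae_mono (Measure.restrict_mono hsub le_rfl) hδle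
    have hconst : (∫ _ in Set.Ioc s u, δ) = δ * (u - s) := by
      rw [setIntegral_const, measureReal_def, Real.volume_Ioc, smul_eq_mul,
        ENNReal.toReal_ofReal (sub_nonneg.2 hsu)]
      ring
    rw [← hconst]
    exact setIntegral_mono_ae_restrict (integrableOn_const measure_Ioc_lt_top.ne)
      (hZint s u) hlow
  -- Step 1c : exact derivative a.e.
  have key2 : ∀ᵐ τ ∂(volume.restrict (Set.Ioi (0:ℝ))),
      deriv z τ = vinf - truncMass ρinf τ := by
    filter_upwards [hae, key1, ae_restrict_mem measurableSet_Ioi] with τ hvi' h1 hτ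
    obtain ⟨hdiff, hvi⟩ := hvi'
    refine le_antisymm ?_ (by linarith)
    have hub : ∀ η > (0:ℝ), truncMass ρinf τ - 2*η ≤ vinf - deriv z τ := by
      intro η hη
      obtain ⟨τ0, hτ0pos, hτ0⟩ := tm_small hρint hη
      set ε := δ * τ0 with hεdef
      have hεpos : 0 < ε := mul_pos hδpos hτ0pos
      have hvi2 := hvi (-ε)
      have hca : ∀ a ∈ Set.Ioc (0:ℝ) τ, δ * a ≤ z τ - z (τ - a) := by
        intro a ha
        have := hgrow (τ - a) τ (by linarith [ha.2]) (by linarith [ha.1])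
        simpa using this
      have hIc := hint τ hτ 0
      simp only [add_zero] at hIc
      have hIε := hint τ hτ (-ε)
      -- RHS of the indicator-decomposed bound
      have hR1 : IntegrableOn (fun a => ρinf a * |z τ - z (τ - a)| - ε * ρinf a
          + 2*ε*((Set.Ioc (0:ℝ) τ0).indicator ρinf a)) (Set.Ioc 0 τ) := by
        exact ((hIc.sub ((hρIoc τ).const_mul ε)).add
          (((hρIoc τ).indicator measurableSet_Ioc).const_mul (2*ε)))
      have hptwise : ∀ a ∈ Set.Ioc (0:ℝ) τ,
          ρinf a * |z τ - z (τ - a) + -ε|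
          ≤ ρinf a * |z τ - z (τ - a)| - ε * ρinf a
            + 2*ε*((Set.Ioc (0:ℝ) τ0).indicator ρinf a) := by
        intro a ha
        have hρa := hρnn a ha.1
        have hc := hca a ha
        have hcpos : 0 < z τ - z (τ - a) := lt_of_lt_of_le (mul_pos hδpos ha.1) hc
        by_cases hle : a ≤ τ0
        · rw [Set.indicator_of_mem (Set.mem_Ioc.2 ⟨ha.1, hle⟩)]
          have habs : |z τ - z (τ - a) + -ε| ≤ |z τ - z (τ - a)| + ε := by
            calc |z τ - z (τ - a) + -ε| ≤ |z τ - z (τ - a)| + |(-ε)| := abs_add_le _ _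
              _ = |z τ - z (τ - a)| + ε := by rw [abs_neg, abs_of_pos hεpos]
          nlinarith [mul_le_mul_of_nonneg_left habs hρa]
        · rw [Set.indicator_of_notMem (fun hmem => hle hmem.2)]
          push_neg at hle
          have hεlt : ε ≤ z τ - z (τ - a) := by
            have : δ * τ0 ≤ δ * a := mul_le_mul_of_nonneg_left hle.le hδpos.le
            linarith
          have habs : |z τ - z (τ - a) + -ε| = |z τ - z (τ - a)| - ε := by
            rw [abs_of_pos hcpos, abs_of_nonneg (by linarith)]
            ring
          nlinarith [habs]
      have hRHS : (∫ a in Set.Ioc (0:ℝ) τ, ρinf a * |z τ - z (τ - a) + -ε|)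
          ≤ (∫ a in Set.Ioc (0:ℝ) τ, ρinf a * |z τ - z (τ - a)|)
            - ε * truncMass ρinf τ + 2*ε*η := by
        have h1' := setIntegral_mono_on hIε hR1 measurableSet_Ioc hptwise
        have h2' : (∫ a in Set.Ioc (0:ℝ) τ, (ρinf a * |z τ - z (τ - a)| - ε * ρinf a
            + 2*ε*((Set.Ioc (0:ℝ) τ0).indicator ρinf a)))
            = (∫ a in Set.Ioc (0:ℝ) τ, ρinf a * |z τ - z (τ - a)|)
              - ε * truncMass ρinf τ
              + 2*ε * ∫ a in Set.Ioc (0:ℝ) τ, (Set.Ioc (0:ℝ) τ0).indicator ρinf a := by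
          have hA : IntegrableOn (fun a => ρinf a * |z τ - z (τ - a)| - ε * ρinf a)
              (Set.Ioc 0 τ) := hIc.sub ((hρIoc τ).const_mul ε)
          have hB : IntegrableOn
              (fun a => 2*ε*((Set.Ioc (0:ℝ) τ0).indicator ρinf a)) (Set.Ioc 0 τ) :=
            ((hρIoc τ).indicator measurableSet_Ioc).const_mul (2*ε)
          have hC : IntegrableOn (fun a => ε * ρinf a) (Set.Ioc (0:ℝ) τ) :=
            (hρIoc τ).const_mul ε
          rw [integral_add hA hB, integral_sub hIc hC, integral_const_mul,
            integral_const_mul, truncMass]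
        have h3' : (∫ a in Set.Ioc (0:ℝ) τ, (Set.Ioc (0:ℝ) τ0).indicator ρinf a) ≤ η := by
          rw [setIntegral_indicator measurableSet_Ioc]
          calc (∫ a in Set.Ioc (0:ℝ) τ ∩ Set.Ioc (0:ℝ) τ0, ρinf a)
              ≤ truncMass ρinf τ0 := by
                rw [truncMass]
                refine setIntegral_mono_set (hρIoc τ0)
                  (((ae_restrict_mem measurableSet_Ioc).mono fun a ha => hρnn a ha.1))
                  (HasSubset.Subset.eventuallyLE (inter_subset_right))
            _ ≤ η := hτ0
        calc (∫ a in Set.Ioc (0:ℝ) τ, ρinf a * |z τ - z (τ - a) + -ε|)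
            ≤ _ := h1'
          _ ≤ _ := by rw [h2']; nlinarith [h3', hεpos]
      -- combine with the VI at w = -ε
      have := hvi2.trans hRHS
      have hdiv : -ε * (vinf - deriv z τ) ≤ -ε * truncMass ρinf τ + 2*ε*η := by nlinarith
      nlinarith [hdiv, hεpos]
    by_contra hcon
    push_neg at hcon
    have hpos' : 0 < (truncMass ρinf τ - (vinf - deriv z τ))/4 := by linarith
    have := hub _ hpos'
    linarith
  -- Step 2 : integrate
  have hsub : Set.Ioc (0:ℝ) t ⊆ Set.Ioi (0:ℝ) := Ioc_subset_Ioi_self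
  have hd' : ∀ᵐ τ ∂(volume.restrict (Set.Ioc (0:ℝ) t)), DifferentiableAt ℝ Z τ :=
    ae_mono (Measure.restrict_mono hsub le_rfl) hZdiff
  have hftc := lipschitz_ftc hZlip ht hd'
  rw [hZeq t ht, hZeq 0 le_rfl, hz0] at hftc
  have hcongr : (∫ τ in Set.Ioc (0:ℝ) t, deriv Z τ)
      = ∫ τ in Set.Ioc (0:ℝ) t, (vinf - truncMass ρinf τ) := by
    refine integral_congr_ae ?_
    filter_upwards [ae_mono (Measure.restrict_mono hsub le_rfl) key2,
      ae_restrict_mem measurableSet_Ioc] with τ hk hτ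
    rw [← hderivEq τ hτ.1, hk]
  rw [hcongr] at hftc
  linarith

lemma solAbs_neg {ρinf : ℝ → ℝ} {vinf z0 : ℝ} {z : ℝ → ℝ}
    (h : SolAbsVI ρinf vinf z0 z) : SolAbsVI ρinf (-vinf) (-z0) (fun x => -(z x)) := by
  obtain ⟨⟨K, hK⟩, hz0, hae⟩ := h
  refine ⟨⟨K, ?_⟩, by simp [hz0], ?_⟩
  · intro x hx y hy
    have := hK hx hy
    simpa [edist_neg_neg] using this
  · filter_upwards [hae] with t ht
    obtain ⟨hd, hvi⟩ := ht
    refine ⟨hd.neg, fun w => ?_⟩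
    have h2 := hvi (-w)
    have e0 : deriv (fun x => -(z x)) t = -deriv z t := deriv.neg
    have e1 : (∫ a in Set.Ioc (0:ℝ) t,
        ρinf a * |(fun x => -(z x)) t - (fun x => -(z x)) (t - a)|)
        = ∫ a in Set.Ioc (0:ℝ) t, ρinf a * |z t - z (t - a)| := by
      refine integral_congr_ae (Eventually.of_forall fun a => ?_)
      simp only
      rw [show -(z t) - -(z (t - a)) = -(z t - z (t - a)) by ring, abs_neg]
    have e2 : (∫ a in Set.Ioc (0:ℝ) t,
        ρinf a * |(fun x => -(z x)) t - (fun x => -(z x)) (t - a) + w|)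
        = ∫ a in Set.Ioc (0:ℝ) t, ρinf a * |z t - z (t - a) + -w| := by
      refine integral_congr_ae (Eventually.of_forall fun a => ?_)
      simp only
      rw [show -(z t) - -(z (t - a)) + w = -(z t - z (t - a) + -w) by ring, abs_neg]
    rw [e0, e1, e2]
    have e3 : (-vinf - -deriv z t) * w = (vinf - deriv z t) * (-w) := by ring
    rw [e3]
    exact h2

lemma second_form (ρinf : ℝ → ℝ) (hρint : IntegrableOn ρinf (Set.Ioi 0))
    (hρnn : ∀ a ∈ Set.Ioi (0:ℝ), 0 ≤ ρinf a)
    (μinf : ℝ) (hμ : μinf = ∫ a in Set.Ioi (0:ℝ), ρinf a) (s vinf : ℝ) {t : ℝ} (ht : 0 ≤ t) :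
    (∫ τ in Set.Ioc (0:ℝ) t, (vinf - s * truncMass ρinf τ))
      = (vinf - s * μinf) * t + s * ∫ τ in Set.Ioc (0:ℝ) t, ∫ a in Set.Ioi τ, ρinf a := by
  have hμnn : 0 ≤ μinf := hμ ▸ setIntegral_nonneg measurableSet_Ioi hρnn
  have hsplit : ∀ τ : ℝ, 0 < τ → μinf = truncMass ρinf τ + ∫ a in Set.Ioi τ, ρinf a := by
    intro τ hτ
    rw [hμ, truncMass, ← setIntegral_union (Ioc_disjoint_Ioi le_rfl) measurableSet_Ioi
      (hρint.mono_set Ioc_subset_Ioi_self) (hρint.mono_set (Ioi_subset_Ioi hτ.le)),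
      Ioc_union_Ioi_eq_Ioi hτ.le]
  have htm_int : IntegrableOn (truncMass ρinf) (Set.Ioc 0 t) := by
    refine Integrable.mono' (g := fun _ => μinf)
      (integrableOn_const measure_Ioc_lt_top.ne)
      ((tm_mono hρint hρnn).measurable.aestronglyMeasurable.restrict)
      (Eventually.of_forall fun τ => ?_)
    rw [Real.norm_eq_abs, abs_of_nonneg (tm_nonneg hρnn τ)]
    exact (tm_le hρint hρnn τ).trans_eq hμ.symm
  have hg_int : IntegrableOn (fun τ => ∫ a in Set.Ioi τ, ρinf a) (Set.Ioc 0 t) := by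
    have hsub : IntegrableOn (fun τ => μinf - truncMass ρinf τ) (Set.Ioc (0:ℝ) t) :=
      ((integrableOn_const measure_Ioc_lt_top.ne) :
        IntegrableOn (fun _ => μinf) (Set.Ioc (0:ℝ) t) volume).sub htm_int
    refine IntegrableOn.congr_fun hsub (fun τ hτ => ?_) measurableSet_Ioc
    have := hsplit τ hτ.1
    linarith
  have hconst_int : IntegrableOn (fun _ : ℝ => vinf - s * μinf) (Set.Ioc (0:ℝ) t) :=
    integrableOn_const measure_Ioc_lt_top.ne
  calc (∫ τ in Set.Ioc (0:ℝ) t, (vinf - s * truncMass ρinf τ))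
      = ∫ τ in Set.Ioc (0:ℝ) t,
        ((vinf - s * μinf) + s * ∫ a in Set.Ioi τ, ρinf a) := by
        refine setIntegral_congr_fun measurableSet_Ioc fun τ hτ => ?_
        have h := hsplit τ hτ.1
        linear_combination s * h
    _ = (∫ _ in Set.Ioc (0:ℝ) t, (vinf - s * μinf))
        + ∫ τ in Set.Ioc (0:ℝ) t, s * ∫ a in Set.Ioi τ, ρinf a :=
        integral_add hconst_int (hg_int.const_mul s)
    _ = (vinf - s * μinf) * t + s * ∫ τ in Set.Ioc (0:ℝ) t, ∫ a in Set.Ioi τ, ρinf a := by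
        rw [setIntegral_const, integral_const_mul, smul_eq_mul, measureReal_def, Real.volume_Ioc,
          ENNReal.toReal_ofReal (by linarith : (0:ℝ) ≤ t - 0)]
        ring

/-- Explicit kinematic solution for `ψ(u) = |u|` in the moving regime
`v_∞ ∉ [−μ_∞, μ_∞]`: any Lipschitz solution with `z(0) = z⁰` is
`z(t) = z⁰ + ∫₀^t (v_∞ − sgn(v_∞) μ_∞(τ)) dτ
      = z⁰ + γ t + sgn(v_∞) ∫₀^t ∫_τ^∞ ρ_∞(a) da dτ`,
where `γ = v_∞ − sgn(v_∞) μ_∞`. -/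
theorem stmt_18
    (ρinf : ℝ → ℝ)
    (hρpos : ∀ a > (0:ℝ), 0 < ρinf a)
    (hρmono : AntitoneOn ρinf (Ioi 0))
    (hρint : IntegrableOn ρinf (Ioi 0))
    (hρint2 : IntegrableOn (fun a => a * ρinf a) (Ioi 0))
    (vinf z0 μinf : ℝ)
    (hμ : μinf = ∫ a in Ioi (0:ℝ), ρinf a)
    (hv : vinf ∉ Icc (-μinf) μinf) :
    ∀ z : ℝ → ℝ, SolAbsVI ρinf vinf z0 z →
      ∀ t ≥ (0:ℝ),
        z t = z0 + ∫ τ in Ioc (0:ℝ) t, (vinf - Real.sign vinf * truncMass ρinf τ) ∧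
        z t = z0 + (vinf - Real.sign vinf * μinf) * t
          + Real.sign vinf * ∫ τ in Ioc (0:ℝ) t, ∫ a in Ioi τ, ρinf a := by
  have hρnn : ∀ a ∈ Set.Ioi (0:ℝ), 0 ≤ ρinf a := fun a ha => (hρpos a ha).le
  have hμnn : 0 ≤ μinf := hμ ▸ setIntegral_nonneg measurableSet_Ioi hρnn
  intro z hz t ht
  have hcases : μinf < vinf ∨ vinf < -μinf := by
    rcases lt_or_ge μinf vinf with h | h
    · exact Or.inl h
    · rcases lt_or_ge vinf (-μinf) with h' | h'
      · exact Or.inr h'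
      · exact absurd ⟨h', h⟩ hv
  rcases hcases with hpos | hneg
  · have hs : Real.sign vinf = 1 := Real.sign_of_pos (lt_of_le_of_lt hμnn hpos)
    have h1 := main_pos ρinf hρint hρnn vinf z0 μinf hμ hpos z hz ht
    have h2 := second_form ρinf hρint hρnn μinf hμ 1 vinf ht
    rw [hs]
    simp only [one_mul] at h2 ⊢
    refine ⟨h1, ?_⟩
    rw [h1, h2]
    ring
  · have hvneg : vinf < 0 := lt_of_lt_of_le hneg (neg_nonpos.2 hμnn)
    have hs : Real.sign vinf = -1 := Real.sign_of_neg hvneg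
    have hz' : SolAbsVI ρinf (-vinf) (-z0) (fun x => -(z x)) := solAbs_neg hz
    have h1 : -(z t) = -z0 + ∫ τ in Ioc (0:ℝ) t, (-vinf - truncMass ρinf τ) :=
      main_pos ρinf hρint hρnn (-vinf) (-z0) μinf hμ (by linarith) _ hz' ht
    have h1' : z t = z0 + ∫ τ in Ioc (0:ℝ) t, (vinf - (-1) * truncMass ρinf τ) := by
      have e : (fun τ => -vinf - truncMass ρinf τ)
          = fun τ => -(vinf - (-1) * truncMass ρinf τ) := by funext τ; ring
      rw [e, integral_neg] at h1
      linarith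
    have h2 := second_form ρinf hρint hρnn μinf hμ (-1) vinf ht
    rw [hs]
    refine ⟨h1', ?_⟩
    rw [h1', h2]
    ring
end
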